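/- arXiv:2506.04767 — 4 statements merged into one kernel-verified Lean document; each statement's English description precedes it below -/
import Mathlib

section
/- For every μ ∈ (0,1), let P* be the two-point distribution assigning probability μ/2 to 1 and probability 1−μ/2 to ν' = μ/(2−μ). Then every feasible mechanism (x,p) satisfies ∫ p dP* ≤ μ/(2−μ). Consequently, the seller's optimal worst-case revenue satisfies z*(μ) ≤ μ/(2−μ). -/
open MeasureTheory Set

noncomputable section

/-- A Borel probability measure on ℝ supported on `[0,1]`. -/
def IsDistOn01 (P : Measure ℝ) : Prop :=
  IsProbabilityMeasure P ∧ P (Set.Icc (0:ℝ) 1)ᶜ = 0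

/-- Membership in the first-moment ambiguity set `P_μ`. -/
def MemAmb (μ : ℝ) (P : Measure ℝ) : Prop :=
  IsDistOn01 P ∧ ∫ ν, ν ∂P = μ

/-- A feasible single-agent mechanism: Borel measurable `x : [0,1] → [0,1]`, `p : [0,1] → ℝ`
satisfying (IC) and (IR). -/
structure Feasible (x p : ℝ → ℝ) : Prop where
  meas_x : Measurable x
  meas_p : Measurable p
  x_mem : ∀ ν ∈ Set.Icc (0:ℝ) 1, x ν ∈ Set.Icc (0:ℝ) 1
  ic : ∀ ν ∈ Set.Icc (0:ℝ) 1, ∀ νh ∈ Set.Icc (0:ℝ) 1, p ν ≤ ν * (x ν - x νh) + νh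
  ir : ∀ ν ∈ Set.Icc (0:ℝ) 1, p ν ≤ ν * x ν

/-- Worst-case expected payment of a payment rule `p` over the ambiguity set `P_μ`. -/
def worstCase (μ : ℝ) (p : ℝ → ℝ) : ℝ :=
  sInf {v : ℝ | ∃ P : Measure ℝ, MemAmb μ P ∧ v = ∫ ν, p ν ∂P}

/-- The seller's optimal worst-case revenue `z*(μ)`. -/
def zStar (μ : ℝ) : ℝ :=
  sSup {z : ℝ | ∃ x p : ℝ → ℝ, Feasible x p ∧ z = worstCase μ p}

/-- The two-point worst-case distribution assigning probability `μ/2` to `1`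
and probability `1 - μ/2` to `ν' = μ/(2-μ)`. -/
def Pstar (μ : ℝ) : Measure ℝ :=
  ENNReal.ofReal (μ/2) • Measure.dirac 1
    + ENNReal.ofReal (1 - μ/2) • Measure.dirac (μ/(2-μ))

lemma integrable_smul_dirac (f : ℝ → ℝ) (c : ℝ) (a : ℝ) :
    Integrable f (ENNReal.ofReal c • Measure.dirac a) := by
  refine Integrable.smul_measure ?_ ENNReal.ofReal_ne_top
  refine (integrable_const (f a)).congr ?_
  rw [MeasureTheory.ae_dirac_eq]
  exact Filter.eventually_pure.2 rfl

lemma integral_Pstar (μ : ℝ) (hμ0 : 0 ≤ μ) (hμ2 : μ ≤ 2) (f : ℝ → ℝ) :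
    ∫ ν, f ν ∂(Pstar μ) = (μ/2) * f 1 + (1 - μ/2) * f (μ/(2-μ)) := by
  have h1 : (0:ℝ) ≤ μ/2 := by linarith
  have h2 : (0:ℝ) ≤ 1 - μ/2 := by linarith
  rw [Pstar, integral_add_measure (integrable_smul_dirac f _ _) (integrable_smul_dirac f _ _),
      integral_smul_measure, integral_smul_measure, integral_dirac, integral_dirac,
      ENNReal.toReal_ofReal h1, ENNReal.toReal_ofReal h2]
  simp [smul_eq_mul]

/-- Under the two-point distribution `P*`, every feasible mechanism earns
at most `μ/(2-μ)` in expectation; consequently `z*(μ) ≤ μ/(2-μ)`. -/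
theorem upper_bound_from_two_point_distribution
    (μ : ℝ) (hμ : μ ∈ Set.Ioo (0:ℝ) 1) :
    (∀ x p : ℝ → ℝ, Feasible x p → ∫ ν, p ν ∂(Pstar μ) ≤ μ/(2-μ)) ∧
    zStar μ ≤ μ/(2-μ) := by
  obtain ⟨hμ0, hμ1⟩ := hμ
  have h2μ : (0:ℝ) < 2 - μ := by linarith
  set ν' : ℝ := μ/(2-μ) with hν'def
  have hν'0 : 0 ≤ ν' := by positivity
  have hν'1 : ν' ≤ 1 := by rw [div_le_one h2μ]; linarith
  have hν'mem : ν' ∈ Set.Icc (0:ℝ) 1 := ⟨hν'0, hν'1⟩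
  have h1mem : (1:ℝ) ∈ Set.Icc (0:ℝ) 1 := ⟨zero_le_one, le_refl 1⟩
  have hkey : (1 - μ/2) * ν' = μ/2 := by
    rw [hν'def]; field_simp
  have hmain : ∀ x p : ℝ → ℝ, Feasible x p → ∫ ν, p ν ∂(Pstar μ) ≤ ν' := by
    intro x p hf
    rw [integral_Pstar μ hμ0.le (by linarith) p]
    have hic := hf.ic 1 h1mem ν' hν'mem
    have hir := hf.ir ν' hν'mem
    obtain ⟨hx10, hx11⟩ := hf.x_mem 1 h1mem
    obtain ⟨hxν0, hxν1⟩ := hf.x_mem ν' hν'mem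
    have hb1 : (μ/2) * p 1 ≤ (μ/2) * (x 1 - x ν' + ν') := by
      apply mul_le_mul_of_nonneg_left (by linarith) (by linarith)
    have hb2 : (1 - μ/2) * p ν' ≤ (1 - μ/2) * (ν' * x ν') := by
      apply mul_le_mul_of_nonneg_left hir (by linarith)
    have hb3 : (1 - μ/2) * (ν' * x ν') = (μ/2) * x ν' := by
      rw [← mul_assoc, hkey]
    nlinarith [hkey]
  have hPmem : MemAmb μ (Pstar μ) := by
    have h1 : (0:ℝ) ≤ μ/2 := by linarith
    have h2 : (0:ℝ) ≤ 1 - μ/2 := by linarith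
    refine ⟨⟨⟨?_⟩, ?_⟩, ?_⟩
    · rw [Pstar]
      simp only [Measure.add_apply, Measure.smul_apply, Measure.dirac_apply_of_mem (Set.mem_univ _),
        smul_eq_mul, mul_one]
      rw [← ENNReal.ofReal_add h1 h2]
      norm_num
    · rw [Pstar]
      simp only [Measure.add_apply, Measure.smul_apply, smul_eq_mul]
      rw [Measure.dirac_apply, Measure.dirac_apply]
      simp [Set.indicator_of_notMem, h1mem, hν'mem]
      exact Or.inr hν'mem
    · rw [integral_Pstar μ hμ0.le (by linarith) (fun ν => ν)]
      simp only [mul_one]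
      linarith [hkey]
  constructor
  · exact hmain
  · apply Real.sSup_le
    · rintro z ⟨x, p, hf, rfl⟩
      set S := {v : ℝ | ∃ P : Measure ℝ, MemAmb μ P ∧ v = ∫ ν, p ν ∂P}
      by_cases hbdd : BddBelow S
      · calc worstCase μ p ≤ ∫ ν, p ν ∂(Pstar μ) :=
              csInf_le hbdd ⟨Pstar μ, hPmem, rfl⟩
          _ ≤ ν' := hmain x p hf
      · rw [worstCase, Real.sInf_of_not_bddBelow hbdd]
        positivity
    · positivity


end
end

section
/- Let k ∈ (0,1)^N satisfy Assumption 1. Then there exists a robustly optimal feasible mechanism (x,p) — i.e., one attaining z*(k) = sup over feasible mechanisms of inf over P ∈ P_k of ∫ p dP — such that (i) p(ν) = inf over ν̂ ∈ [0,ν] of { ν(x(ν) − x(ν̂)) + ν̂ } for all ν ∈ [0,1], and (ii) x is weakly increasing and concave on [0,1] with x(0) = 0 and x(1) = 1. -/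
open MeasureTheory Set

noncomputable section

/-- Membership in the moment ambiguity set `P_k`: probability measures on `[0,1]`
whose first `N` moments are given by `k`. -/
def MemAmbN {N : ℕ} (k : Fin N → ℝ) (P : Measure ℝ) : Prop :=
  IsDistOn01 P ∧ ∀ i : Fin N, ∫ ν, ν^((i : ℕ) + 1) ∂P = k i

/-- Assumption 1: the ambiguity set is nonempty for all nearby moment vectors. -/
def Assumption1 {N : ℕ} (k : Fin N → ℝ) : Prop :=
  ∃ ε > 0, ∀ kh : Fin N → ℝ, (∀ i, kh i ∈ Set.Ioo (0:ℝ) 1) → ‖kh - k‖ < ε →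
    ∃ P : Measure ℝ, MemAmbN kh P

/-- Worst-case expected payment of a payment rule `p` over the ambiguity set `P_k`. -/
def worstCaseN {N : ℕ} (k : Fin N → ℝ) (p : ℝ → ℝ) : ℝ :=
  sInf {v : ℝ | ∃ P : Measure ℝ, MemAmbN k P ∧ v = ∫ ν, p ν ∂P}

/-- The seller's optimal worst-case revenue `z*(k)`. -/
def zStarN {N : ℕ} (k : Fin N → ℝ) : ℝ :=
  sSup {z : ℝ | ∃ x p : ℝ → ℝ, Feasible x p ∧ z = worstCaseN k p}

open Filter

namespace RobustAux

/-- modify `x` to have value 1 at 1. -/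
def fixOne (x : ℝ → ℝ) : ℝ → ℝ := fun t => if t = 1 then 1 else x t

/-- affine majorants values at ν -/
def majorSet (x : ℝ → ℝ) (ν : ℝ) : Set ℝ :=
  {c | ∃ a b : ℝ, (∀ t ∈ Icc (0:ℝ) 1, fixOne x t ≤ a*t + b) ∧ c = a*ν + b}

def E (x : ℝ → ℝ) (ν : ℝ) : ℝ := sInf (majorSet x ν)

/-- concave monotone envelope with env 0 = 0, env 1 = 1 -/
def env (x : ℝ → ℝ) : ℝ → ℝ := fun ν =>
  if ν ≤ 0 then 0 else if ν ≤ 1 then E x ν else 1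

section envfacts

variable {x : ℝ → ℝ}

lemma fixOne_mem (hx : ∀ t ∈ Icc (0:ℝ) 1, x t ∈ Icc (0:ℝ) 1) :
    ∀ t ∈ Icc (0:ℝ) 1, fixOne x t ∈ Icc (0:ℝ) 1 := by
  intro t ht
  unfold fixOne
  split
  · exact ⟨zero_le_one, le_refl 1⟩
  · exact hx t ht

lemma majorSet_nonempty (hx : ∀ t ∈ Icc (0:ℝ) 1, x t ∈ Icc (0:ℝ) 1) (ν : ℝ) :
    (majorSet x ν).Nonempty := by
  refine ⟨1, 0, 1, fun t ht => ?_, by ring⟩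
  have := (fixOne_mem hx t ht).2
  linarith

lemma majorSet_lb {ν : ℝ} (hν : ν ∈ Icc (0:ℝ) 1) :
    ∀ c ∈ majorSet x ν, fixOne x ν ≤ c := by
  rintro c ⟨a, b, hmaj, rfl⟩
  exact hmaj ν hν

lemma majorSet_bddBelow {ν : ℝ} (hν : ν ∈ Icc (0:ℝ) 1) : BddBelow (majorSet x ν) :=
  ⟨fixOne x ν, fun c hc => majorSet_lb hν c hc⟩

lemma E_ge (hx : ∀ t ∈ Icc (0:ℝ) 1, x t ∈ Icc (0:ℝ) 1) {ν : ℝ} (hν : ν ∈ Icc (0:ℝ) 1) :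
    fixOne x ν ≤ E x ν :=
  le_csInf (majorSet_nonempty hx ν) (majorSet_lb hν)

lemma E_nonneg (hx : ∀ t ∈ Icc (0:ℝ) 1, x t ∈ Icc (0:ℝ) 1) {ν : ℝ} (hν : ν ∈ Icc (0:ℝ) 1) :
    0 ≤ E x ν :=
  le_trans (fixOne_mem hx ν hν).1 (E_ge hx hν)

lemma E_le_one (hx : ∀ t ∈ Icc (0:ℝ) 1, x t ∈ Icc (0:ℝ) 1) {ν : ℝ} (hν : ν ∈ Icc (0:ℝ) 1) :
    E x ν ≤ 1 := by
  refine csInf_le (majorSet_bddBelow hν) ⟨0, 1, fun t ht => ?_, by ring⟩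
  have := (fixOne_mem hx t ht).2
  linarith

lemma E_one (hx : ∀ t ∈ Icc (0:ℝ) 1, x t ∈ Icc (0:ℝ) 1) : E x 1 = 1 := by
  apply le_antisymm (E_le_one hx (by norm_num))
  have := E_ge hx (show (1:ℝ) ∈ Icc (0:ℝ) 1 by norm_num)
  simpa [fixOne] using this

/-- three point concavity of E on `Icc 0 1` -/
lemma E_concave3 (hx : ∀ t ∈ Icc (0:ℝ) 1, x t ∈ Icc (0:ℝ) 1) {u v s t : ℝ}
    (hu : u ∈ Icc (0:ℝ) 1) (hv : v ∈ Icc (0:ℝ) 1)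
    (hs : 0 ≤ s) (ht : 0 ≤ t) (hst : s + t = 1) :
    s * E x u + t * E x v ≤ E x (s*u + t*v) := by
  apply le_csInf (majorSet_nonempty hx _)
  rintro c ⟨a, b, hmaj, rfl⟩
  have h1 : E x u ≤ a*u + b := csInf_le (majorSet_bddBelow hu) ⟨a, b, hmaj, rfl⟩
  have h2 : E x v ≤ a*v + b := csInf_le (majorSet_bddBelow hv) ⟨a, b, hmaj, rfl⟩
  calc s * E x u + t * E x v ≤ s*(a*u+b) + t*(a*v+b) :=
        add_le_add (mul_le_mul_of_nonneg_left h1 hs) (mul_le_mul_of_nonneg_left h2 ht)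
    _ = a*(s*u + t*v) + b := by linear_combination b * hst

/-- scaling inequality via the `β` trick -/
lemma E_scale (hx : ∀ t ∈ Icc (0:ℝ) 1, x t ∈ Icc (0:ℝ) 1) {b t : ℝ}
    (hb : b ∈ Icc (0:ℝ) 1) (hb0 : 0 < b)
    (ht0 : 0 ≤ t) (ht1 : t ≤ 1) (hm : 0 < t * b) :
    t * E x b ≤ E x (t * b) := by
  set m := t * b with hmdef
  have hmb : m ≤ b := by nlinarith
  have hm1 : m ≤ 1 := le_trans hmb hb.2
  refine le_of_forall_pos_le_add ?_
  intro δ hδ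
  set ε : ℝ := min (m/2) (δ*b/2) with hεdef
  have hε0 : 0 < ε := by
    apply lt_min <;> positivity
  have hεm : ε < m := lt_of_le_of_lt (min_le_left _ _) (by linarith)
  have hεb2 : ε ≤ b/2 := le_trans (min_le_left _ _) (by linarith)
  have hεb : ε < b := by linarith
  have hεδ : ε ≤ δ*b/2 := min_le_right _ _
  set β : ℝ := (m - ε)/(b - ε) with hβdef
  have hbε : 0 < b - ε := by linarith
  have hβ0 : 0 ≤ β := div_nonneg (by linarith) (by linarith)
  have hβ1 : β ≤ 1 := by
    rw [div_le_one hbε]; linarith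
  have hcombo : β * b + (1-β) * ε = m := by
    field_simp [hβdef]
    have e : β * (b - ε) = m - ε := by rw [hβdef]; exact div_mul_cancel₀ _ hbε.ne'
    linear_combination e
  have hεIcc : ε ∈ Icc (0:ℝ) 1 := ⟨le_of_lt hε0, by linarith⟩
  have h3 := E_concave3 hx hb hεIcc hβ0 (by linarith : (0:ℝ) ≤ 1 - β) (by ring)
  rw [hcombo] at h3
  have hEε : 0 ≤ E x ε := E_nonneg hx hεIcc
  have hEb1 : E x b ≤ 1 := E_le_one hx hb
  have hEb0 : 0 ≤ E x b := E_nonneg hx hb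
  -- t*E b - E m ≤ (t - β) * E b ≤ t - β = ε(1-t)/(b-ε) ≤ ε/(b-ε) ≤ δ
  have htβ : t - β ≤ δ := by
    have h4 : t - β = ε*(1-t)/(b-ε) := by
      field_simp [hβdef, hmdef]
      linear_combination -hcombo - hmdef
    rw [h4]
    rw [div_le_iff₀ hbε]
    nlinarith
  nlinarith [mul_le_mul_of_nonneg_right (sub_le_iff_le_add.mpr (le_add_of_le_of_nonneg (le_refl t) (le_refl 0))) hEb0]


lemma env_zero : env x 0 = 0 := by simp [env]

lemma env_of_pos {ν : ℝ} (h0 : 0 < ν) (h1 : ν ≤ 1) : env x ν = E x ν := by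
  simp [env, not_le.mpr h0, h1]

lemma env_one (hx : ∀ t ∈ Icc (0:ℝ) 1, x t ∈ Icc (0:ℝ) 1) : env x 1 = 1 := by
  rw [env_of_pos one_pos le_rfl, E_one hx]

lemma env_mem (hx : ∀ t ∈ Icc (0:ℝ) 1, x t ∈ Icc (0:ℝ) 1) (ν : ℝ) :
    env x ν ∈ Icc (0:ℝ) 1 := by
  unfold env
  split
  · exact ⟨le_rfl, zero_le_one⟩
  · split
    · rename_i h0 h1
      exact ⟨E_nonneg hx ⟨le_of_lt (not_le.mp h0), h1⟩, E_le_one hx ⟨le_of_lt (not_le.mp h0), h1⟩⟩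
    · exact ⟨zero_le_one, le_rfl⟩

lemma env_concave (hx : ∀ t ∈ Icc (0:ℝ) 1, x t ∈ Icc (0:ℝ) 1) :
    ConcaveOn ℝ (Icc (0:ℝ) 1) (env x) := by
  refine ⟨convex_Icc _ _, ?_⟩
  intro a ha b hb s t hs ht hst
  simp only [smul_eq_mul]
  have hm : s*a + t*b ∈ Icc (0:ℝ) 1 := (convex_Icc (0:ℝ) 1) ha hb hs ht hst
  rcases eq_or_lt_of_le hm.1 with hm0 | hm0
  · -- s*a + t*b = 0
    have hsa : s * a = 0 := by nlinarith [ha.1, hb.1]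
    have htb : t * b = 0 := by nlinarith [ha.1, hb.1]
    have h1 : s * env x a = 0 := by
      rcases mul_eq_zero.mp hsa with h | h
      · rw [h, zero_mul]
      · rw [h, env_zero, mul_zero]
    have h2 : t * env x b = 0 := by
      rcases mul_eq_zero.mp htb with h | h
      · rw [h, zero_mul]
      · rw [h, env_zero, mul_zero]
    rw [← hm0, env_zero, h1, h2]; norm_num
  · -- 0 < s*a + t*b
    rw [env_of_pos hm0 hm.2]

    rcases eq_or_lt_of_le ha.1 with ha0 | ha0
    · -- a = 0
      subst ha0
      simp only [mul_zero, zero_add, env_zero] at hm0 ⊢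
      have hb0 : 0 < b := by nlinarith
      have ht0 : 0 < t := by nlinarith
      rw [env_of_pos hb0 hb.2]
      exact E_scale hx hb hb0 ht (by linarith) hm0
    · rcases eq_or_lt_of_le hb.1 with hb0 | hb0
      · -- b = 0
        subst hb0
        simp only [mul_zero, add_zero, env_zero] at hm0 ⊢
        have hs0 : 0 < s := by nlinarith
        rw [env_of_pos ha0 ha.2]
        exact E_scale hx ha ha0 hs (by linarith) hm0
      · rw [env_of_pos ha0 ha.2, env_of_pos hb0 hb.2]
        exact E_concave3 hx ha hb hs ht hst

lemma env_mono (hx : ∀ t ∈ Icc (0:ℝ) 1, x t ∈ Icc (0:ℝ) 1) : Monotone (env x) := by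
  intro a b hab
  rcases le_or_gt a 0 with ha | ha
  · rw [show env x a = 0 by simp [env, ha]]
    exact (env_mem hx b).1
  · rcases le_or_gt b 1 with hb | hb
    · have ha1 : a ≤ 1 := le_trans hab hb
      rw [env_of_pos ha ha1, env_of_pos (lt_of_lt_of_le ha hab) hb]
      rcases eq_or_lt_of_le ha1 with ha1' | ha1'
      · have : a = b := le_antisymm hab (by rw [ha1']; exact hb)
        rw [this]
      · set lam := (1-b)/(1-a) with hlam
        have h1a : 0 < 1 - a := by linarith
        have hlam0 : 0 ≤ lam := div_nonneg (by linarith) (by linarith)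
        have hlam1 : lam ≤ 1 := by rw [div_le_one h1a]; linarith
        have hcombo : lam * a + (1-lam) * 1 = b := by
          field_simp [hlam]
          have e : lam * (1 - a) = 1 - b := by rw [hlam]; exact div_mul_cancel₀ _ h1a.ne'
          linear_combination -e
        have h3 := E_concave3 hx (u := a) (v := 1) (s := lam) (t := 1-lam)
          ⟨le_of_lt ha, ha1⟩ (by norm_num) hlam0 (by linarith) (by ring)
        rw [hcombo, E_one hx] at h3
        nlinarith [E_le_one hx (show a ∈ Icc (0:ℝ) 1 from ⟨le_of_lt ha, ha1⟩)]
    · have hb0 : (0:ℝ) < b := lt_of_lt_of_le ha hab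
      have : env x b = 1 := by simp [env, not_le.mpr hb0, not_le.mpr hb]
      rw [this]
      exact (env_mem hx a).2


/-- step 1 : feasibility transfers to fixOne x -/
lemma fixOne_ic {p : ℝ → ℝ} (hf : Feasible x p) :
    ∀ ν ∈ Icc (0:ℝ) 1, ∀ s ∈ Icc (0:ℝ) 1, p ν ≤ ν * (fixOne x ν - fixOne x s) + s := by
  intro ν hν s hs
  have hx1 : x 1 ≤ 1 := (hf.x_mem 1 (by norm_num)).2
  have hir : p ν ≤ ν * x ν := hf.ir ν hν
  have hxν : x ν ∈ Icc (0:ℝ) 1 := hf.x_mem ν hν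
  unfold fixOne
  by_cases hsone : s = 1
  · subst hsone
    by_cases hνone : ν = 1
    · subst hνone; simp; linarith
    · simp [hνone]
      nlinarith [hν.1, hν.2, hxν.1, hxν.2]
  · by_cases hνone : ν = 1
    · subst hνone
      simp [hsone]
      have := hf.ic 1 (by norm_num) s hs
      nlinarith [(hf.x_mem s hs).1]
    · simp [hsone, hνone]
      exact hf.ic ν hν s hs

lemma fixOne_ir {p : ℝ → ℝ} (hf : Feasible x p) :
    ∀ ν ∈ Icc (0:ℝ) 1, p ν ≤ ν * fixOne x ν := by
  intro ν hν
  unfold fixOne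
  by_cases hνone : ν = 1
  · subst hνone
    simp
    have := hf.ir 1 (by norm_num)
    nlinarith [(hf.x_mem 1 (by norm_num)).2]
  · simp [hνone]; exact hf.ir ν hν

/-- feasibility transfers to the envelope -/
lemma env_ic {p : ℝ → ℝ} (hf : Feasible x p) :
    ∀ ν ∈ Icc (0:ℝ) 1, ∀ νh ∈ Icc (0:ℝ) 1, p ν ≤ ν * (env x ν - env x νh) + νh := by
  intro ν hν νh hνh
  have hx := hf.x_mem
  have henv_ge : ∀ w ∈ Icc (0:ℝ) 1, 0 < w → fixOne x w ≤ env x w := by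
    intro w hw hw0
    rw [env_of_pos hw0 hw.2]
    exact E_ge hx hw
  rcases eq_or_lt_of_le hν.1 with hν0 | hν0
  · -- ν = 0
    subst hν0
    have : p 0 ≤ 0 := by simpa using hf.ir 0 (by norm_num)
    simp only [zero_mul]
    linarith [hνh.1]
  · rcases eq_or_lt_of_le hνh.1 with hνh0 | hνh0
    · -- νh = 0
      subst hνh0
      rw [env_zero]
      have h1 := fixOne_ir hf ν hν
      have h2 := henv_ge ν hν hν0
      nlinarith
    · -- main case: 0 < ν, 0 < νh
      -- affine majorant ℓ₀(s) = s/ν + fixOne x ν - p ν / ν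
      have hmaj : ∀ s ∈ Icc (0:ℝ) 1, fixOne x s ≤ (1/ν)*s + (fixOne x ν - p ν / ν) := by
        intro s hs
        have h := fixOne_ic hf ν hν s hs
        have hrw : (1/ν)*s + (fixOne x ν - p ν / ν) = (s + ν*fixOne x ν - p ν)/ν := by
          field_simp
          ring
        rw [hrw, le_div_iff₀ hν0]
        nlinarith
      have hEνh : E x νh ≤ (1/ν)*νh + (fixOne x ν - p ν / ν) :=
        csInf_le (majorSet_bddBelow hνh) ⟨1/ν, fixOne x ν - p ν / ν, hmaj, rfl⟩
      have henvνh : env x νh ≤ (1/ν)*νh + (fixOne x ν - p ν / ν) := by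
        rw [env_of_pos hνh0 hνh.2]; exact hEνh
      have henvν : fixOne x ν ≤ env x ν := henv_ge ν hν hν0
      have hν0' : ν ≠ 0 := ne_of_gt hν0
      have expand : ν * ((1/ν)*νh + (fixOne x ν - p ν / ν)) = νh + ν * fixOne x ν - p ν := by
        field_simp
        ring
      nlinarith [mul_le_mul_of_nonneg_left henvνh (le_of_lt hν0)]

lemma env_ir {p : ℝ → ℝ} (hf : Feasible x p) :
    ∀ ν ∈ Icc (0:ℝ) 1, p ν ≤ ν * env x ν := by
  intro ν hν
  rcases eq_or_lt_of_le hν.1 with hν0 | hν0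
  · subst hν0
    have : p 0 ≤ 0 := by simpa using hf.ir 0 (by norm_num)
    simpa using this
  · have h1 := fixOne_ir hf ν hν
    have h2 : fixOne x ν ≤ env x ν := by
      rw [env_of_pos hν0 hν.2]
      exact E_ge hf.x_mem hν
    nlinarith


end envfacts

/-- "buyer surplus" function -/
def Ux (x : ℝ → ℝ) : ℝ → ℝ := fun ν => sSup ((fun t => ν * x t - t) '' Icc (0:ℝ) 1)

/-- the maximal payment rule, clipped to `[0,1]` -/
def Qx (x : ℝ → ℝ) : ℝ → ℝ := fun ν => max 0 (min 1 (ν * x ν - Ux x ν))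

section Qfacts
variable {x : ℝ → ℝ} (hmono : Monotone x) (hx0 : x 0 = 0) (hx1 : x 1 = 1)
  (hconc : ConcaveOn ℝ (Icc (0:ℝ) 1) x)

lemma xval (hmono : Monotone x) (hx0 : x 0 = 0) (hx1 : x 1 = 1) :
    ∀ t ∈ Icc (0:ℝ) 1, x t ∈ Icc (0:ℝ) 1 :=
  fun t ht => ⟨by rw [← hx0]; exact hmono ht.1, by rw [← hx1]; exact hmono ht.2⟩

/-- subhomogeneity from concavity and x 0 = 0 -/
lemma xsub (hx0 : x 0 = 0) (hconc : ConcaveOn ℝ (Icc (0:ℝ) 1) x) :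
    ∀ ν ∈ Icc (0:ℝ) 1, ∀ t ∈ Icc (0:ℝ) 1, ν ≤ t → ν * x t ≤ t * x ν := by
  intro ν hν t ht hνt
  rcases eq_or_lt_of_le ht.1 with ht0 | ht0
  · have hν0 : ν = 0 := le_antisymm (by rw [ht0]; exact hνt) hν.1
    rw [hν0, ← ht0]
  · have hd : ν/t ≤ 1 := by rw [div_le_one ht0]; exact hνt
    have h := hconc.2 ht (show (0:ℝ) ∈ Icc (0:ℝ) 1 by norm_num)
        (show (0:ℝ) ≤ ν/t from div_nonneg hν.1 (le_of_lt ht0))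
        (show (0:ℝ) ≤ 1 - ν/t by linarith)
        (show ν/t + (1 - ν/t) = 1 by ring)
    simp only [smul_eq_mul, hx0, mul_zero, add_zero] at h
    rw [show ν/t*t = ν from by field_simp] at h
    have h2 := mul_le_mul_of_nonneg_left h (le_of_lt ht0)
    calc ν * x t = t * (ν/t * x t) := by field_simp
      _ ≤ t * x ν := h2

lemma UxSet_nonempty (ν : ℝ) : ((fun t => ν * x t - t) '' Icc (0:ℝ) 1).Nonempty :=
  ⟨ν * x 0 - 0, 0, by norm_num⟩

lemma UxSet_bddAbove (hmono : Monotone x) (hx0 : x 0 = 0) (hx1 : x 1 = 1) (ν : ℝ) :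
    BddAbove ((fun t => ν * x t - t) '' Icc (0:ℝ) 1) := by
  refine ⟨max ν 0, ?_⟩
  rintro e ⟨t, ht, rfl⟩
  have hxt := xval hmono hx0 hx1 t ht
  rcases le_or_gt 0 ν with h | h
  · have : ν * x t ≤ ν := by nlinarith [hxt.1, hxt.2]
    have := le_max_left ν (0:ℝ)
    simp only
    nlinarith [ht.1]
  · have : ν * x t ≤ 0 := mul_nonpos_of_nonpos_of_nonneg (le_of_lt h) hxt.1
    have := le_max_right ν (0:ℝ)
    simp only
    nlinarith [ht.1]

lemma U_ge (hmono : Monotone x) (hx0 : x 0 = 0) (hx1 : x 1 = 1) (ν : ℝ)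
    {t : ℝ} (ht : t ∈ Icc (0:ℝ) 1) : ν * x t - t ≤ Ux x ν :=
  le_csSup (UxSet_bddAbove hmono hx0 hx1 ν) ⟨t, ht, rfl⟩

lemma U_nonneg (hmono : Monotone x) (hx0 : x 0 = 0) (hx1 : x 1 = 1) (ν : ℝ) :
    0 ≤ Ux x ν := by
  have := U_ge hmono hx0 hx1 ν (show (0:ℝ) ∈ Icc (0:ℝ) 1 by norm_num)
  rw [hx0] at this
  simpa using this

lemma U_le (hmono : Monotone x) (hx0 : x 0 = 0) (hx1 : x 1 = 1)
    (hconc : ConcaveOn ℝ (Icc (0:ℝ) 1) x) {ν : ℝ} (hν : ν ∈ Icc (0:ℝ) 1) :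
    Ux x ν ≤ ν * x ν := by
  apply csSup_le (UxSet_nonempty ν)
  rintro e ⟨t, ht, rfl⟩
  have hxt := xval hmono hx0 hx1 t ht
  have hxν := xval hmono hx0 hx1 ν hν
  rcases le_or_gt t ν with h | h
  · have : x t ≤ x ν := hmono h
    simp only
    nlinarith [hν.1, ht.1]
  · have hsub := xsub hx0 hconc ν hν t ht (le_of_lt h)
    simp only
    nlinarith [ht.1, hxν.2, hν.1, hxν.1]

lemma U_lip (hmono : Monotone x) (hx0 : x 0 = 0) (hx1 : x 1 = 1) (ν ν' : ℝ) :
    Ux x ν ≤ Ux x ν' + |ν - ν'| := by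
  apply csSup_le (UxSet_nonempty ν)
  rintro e ⟨t, ht, rfl⟩
  have h1 : ν' * x t - t ≤ Ux x ν' := U_ge hmono hx0 hx1 ν' ht
  have hxt := xval hmono hx0 hx1 t ht
  have h2 : (ν - ν') * x t ≤ |ν - ν'| := by
    rcases le_or_gt 0 (ν - ν') with h | h
    · calc (ν - ν') * x t ≤ (ν - ν') * 1 := mul_le_mul_of_nonneg_left hxt.2 h
        _ = ν - ν' := mul_one _
        _ ≤ |ν - ν'| := le_abs_self _
    · calc (ν - ν') * x t ≤ 0 := mul_nonpos_of_nonpos_of_nonneg (le_of_lt h) hxt.1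
        _ ≤ |ν - ν'| := abs_nonneg _
  simp only
  nlinarith

lemma U_meas (hmono : Monotone x) (hx0 : x 0 = 0) (hx1 : x 1 = 1) :
    Measurable (Ux x) := by
  have hlip : LipschitzWith 1 (Ux x) := by
    apply LipschitzWith.of_dist_le_mul
    intro a b
    rw [Real.dist_eq, Real.dist_eq]
    rw [abs_sub_le_iff]
    constructor
    · have := U_lip hmono hx0 hx1 a b
      have habs : |a - b| = |a - b| := rfl
      push_cast
      rw [one_mul]
      linarith [this]
    · have := U_lip hmono hx0 hx1 b a
      push_cast
      rw [one_mul, abs_sub_comm a b]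
      linarith [this]
  exact hlip.continuous.measurable

lemma Q_eq (hmono : Monotone x) (hx0 : x 0 = 0) (hx1 : x 1 = 1)
    (hconc : ConcaveOn ℝ (Icc (0:ℝ) 1) x) {ν : ℝ} (hν : ν ∈ Icc (0:ℝ) 1) :
    Qx x ν = ν * x ν - Ux x ν := by
  have h1 : 0 ≤ ν * x ν - Ux x ν := sub_nonneg.mpr (U_le hmono hx0 hx1 hconc hν)
  have h2 : ν * x ν - Ux x ν ≤ ν := by
    have := U_ge hmono hx0 hx1 ν hν
    linarith
  unfold Qx
  rw [min_eq_right (le_trans h2 hν.2), max_eq_right h1]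

lemma Q_mem (ν : ℝ) : Qx x ν ∈ Icc (0:ℝ) 1 := by
  unfold Qx
  constructor
  · exact le_max_left _ _
  · rcases le_or_gt (min 1 (ν * x ν - Ux x ν)) 0 with h | h
    · rw [max_eq_left h]; exact zero_le_one
    · rw [max_eq_right (le_of_lt h)]; exact min_le_left _ _

lemma Q_le_nu (hmono : Monotone x) (hx0 : x 0 = 0) (hx1 : x 1 = 1)
    (hconc : ConcaveOn ℝ (Icc (0:ℝ) 1) x) {ν : ℝ} (hν : ν ∈ Icc (0:ℝ) 1) :
    Qx x ν ≤ ν := by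
  rw [Q_eq hmono hx0 hx1 hconc hν]
  have := U_ge hmono hx0 hx1 ν hν
  linarith

lemma Q_meas (hmono : Monotone x) (hx0 : x 0 = 0) (hx1 : x 1 = 1) :
    Measurable (Qx x) := by
  apply Measurable.max measurable_const
  apply Measurable.min measurable_const
  exact (measurable_id.mul hmono.measurable).sub (U_meas hmono hx0 hx1)

lemma Q_feas (hmono : Monotone x) (hx0 : x 0 = 0) (hx1 : x 1 = 1)
    (hconc : ConcaveOn ℝ (Icc (0:ℝ) 1) x) : Feasible x (Qx x) := by
  refine ⟨hmono.measurable, Q_meas hmono hx0 hx1, xval hmono hx0 hx1, ?_, ?_⟩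
  · intro ν hν νh hνh
    rw [Q_eq hmono hx0 hx1 hconc hν]
    have := U_ge hmono hx0 hx1 ν hνh
    nlinarith
  · intro ν hν
    rw [Q_eq hmono hx0 hx1 hconc hν]
    have := U_nonneg hmono hx0 hx1 ν
    linarith

/-- the maximal payment dominates any feasible payment for the same allocation;
    we only need the raw inequalities. -/
lemma Q_ge_p (hmono : Monotone x) (hx0 : x 0 = 0) (hx1 : x 1 = 1)
    (hconc : ConcaveOn ℝ (Icc (0:ℝ) 1) x) {p : ℝ → ℝ}
    (hic : ∀ ν ∈ Icc (0:ℝ) 1, ∀ νh ∈ Icc (0:ℝ) 1, p ν ≤ ν * (x ν - x νh) + νh) :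
    ∀ ν ∈ Icc (0:ℝ) 1, p ν ≤ Qx x ν := by
  intro ν hν
  rw [Q_eq hmono hx0 hx1 hconc hν]
  rw [le_sub_iff_add_le, ← le_sub_iff_add_le']
  apply csSup_le (UxSet_nonempty ν)
  rintro e ⟨t, ht, rfl⟩
  have := hic ν hν t ht
  simp only
  nlinarith

lemma mulx_lip (hmono : Monotone x) (hx0 : x 0 = 0) (hx1 : x 1 = 1)
    (hconc : ConcaveOn ℝ (Icc (0:ℝ) 1) x) :
    ∀ a ∈ Icc (0:ℝ) 1, ∀ b ∈ Icc (0:ℝ) 1, |a * x a - b * x b| ≤ 2 * |a - b| := by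
  have key : ∀ a ∈ Icc (0:ℝ) 1, ∀ b ∈ Icc (0:ℝ) 1, b ≤ a → |a * x a - b * x b| ≤ 2 * |a - b| := by
    intro a ha b hb hba
    have hxa := xval hmono hx0 hx1 a ha
    have hxb := xval hmono hx0 hx1 b hb
    have hmx : x b ≤ x a := hmono hba
    have hnn : 0 ≤ a * x a - b * x b := by nlinarith [hb.1, hxb.1]
    have hsub := xsub hx0 hconc b hb a ha hba
    -- b * x a ≤ a * x b ⇒ b(xa - xb) ≤ (a-b) xb
    have hub : a * x a - b * x b ≤ 2 * (a - b) := by nlinarith [hxa.2, hxb.2]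
    rw [abs_of_nonneg hnn, abs_of_nonneg (by linarith : (0:ℝ) ≤ a - b)]
    linarith
  intro a ha b hb
  rcases le_total b a with h | h
  · exact key a ha b hb h
  · rw [abs_sub_comm (a * x a), abs_sub_comm a b]
    exact key b hb a ha h

lemma Q_lip (hmono : Monotone x) (hx0 : x 0 = 0) (hx1 : x 1 = 1)
    (hconc : ConcaveOn ℝ (Icc (0:ℝ) 1) x) :
    ∀ a ∈ Icc (0:ℝ) 1, ∀ b ∈ Icc (0:ℝ) 1, |Qx x a - Qx x b| ≤ 3 * |a - b| := by
  intro a ha b hb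
  rw [Q_eq hmono hx0 hx1 hconc ha, Q_eq hmono hx0 hx1 hconc hb]
  have h1 := mulx_lip hmono hx0 hx1 hconc a ha b hb
  have h2 : |Ux x a - Ux x b| ≤ |a - b| := by
    rw [abs_sub_le_iff]
    constructor
    · linarith [U_lip hmono hx0 hx1 a b]
    · have hh := U_lip hmono hx0 hx1 b a
      have : |b - a| = |a - b| := abs_sub_comm b a
      linarith
  calc |a * x a - Ux x a - (b * x b - Ux x b)| = |(a * x a - b * x b) - (Ux x a - Ux x b)| := by ring_nf
    _ ≤ |a * x a - b * x b| + |Ux x a - Ux x b| := abs_sub _ _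
    _ ≤ 2*|a-b| + |a-b| := add_le_add h1 h2
    _ = 3 * |a - b| := by ring

/-- generic inf/sup flip -/
lemma sInf_const_sub (c : ℝ) (S : Set ℝ) (hne : S.Nonempty) (hbdd : BddAbove S) :
    sInf ((fun y => c - y) '' S) = c - sSup S := by
  apply le_antisymm
  · have h1 : sSup S ≤ c - sInf ((fun y => c - y) '' S) := by
      apply csSup_le hne
      intro y hy
      have : sInf ((fun y => c - y) '' S) ≤ c - y :=
        csInf_le ⟨c - sSup S, by
          rintro e ⟨z, hz, rfl⟩
          have := le_csSup hbdd hz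
          simp only
          linarith⟩ ⟨y, hy, rfl⟩
      linarith
    linarith
  · apply le_csInf (hne.image _)
    rintro e ⟨y, hy, rfl⟩
    have : y ≤ sSup S := le_csSup hbdd hy
    simp only
    linarith

lemma Q_formula (hmono : Monotone x) (hx0 : x 0 = 0) (hx1 : x 1 = 1)
    (hconc : ConcaveOn ℝ (Icc (0:ℝ) 1) x) {ν : ℝ} (hν : ν ∈ Icc (0:ℝ) 1) :
    Qx x ν = sInf ((fun νh => ν*(x ν - x νh) + νh) '' Icc 0 ν) := by
  have himg : (fun νh => ν*(x ν - x νh) + νh) '' Icc 0 ν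
      = (fun y => ν * x ν - y) '' ((fun t => ν * x t - t) '' Icc 0 ν) := by
    rw [Set.image_image]
    apply Set.image_congr
    intro t _
    ring
  have hsub_icc : Icc (0:ℝ) ν ⊆ Icc (0:ℝ) 1 := Icc_subset_Icc le_rfl hν.2
  have hne : ((fun t => ν * x t - t) '' Icc 0 ν).Nonempty :=
    ⟨ν * x 0 - 0, 0, ⟨le_rfl, hν.1⟩, rfl⟩
  have hbdd : BddAbove ((fun t => ν * x t - t) '' Icc 0 ν) :=
    (UxSet_bddAbove hmono hx0 hx1 ν).mono (Set.image_mono hsub_icc)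
  have hsup : sSup ((fun t => ν * x t - t) '' Icc 0 ν) = Ux x ν := by
    apply le_antisymm
    · exact csSup_le_csSup (UxSet_bddAbove hmono hx0 hx1 ν) hne (Set.image_mono hsub_icc)
    · apply csSup_le (UxSet_nonempty ν)
      rintro e ⟨t, ht, rfl⟩
      rcases le_or_gt t ν with h | h
      · exact le_csSup hbdd ⟨t, ⟨ht.1, h⟩, rfl⟩
      · have h1 : ν * x t - t ≤ 0 := by
          have h3 := xsub hx0 hconc ν hν t ht (le_of_lt h)
          have hxν := xval hmono hx0 hx1 ν hν
          have ht0 : (0:ℝ) ≤ t := le_trans hν.1 (le_of_lt h)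
          nlinarith [mul_le_mul_of_nonneg_left hxν.2 ht0]
        have h2 : (0:ℝ) ≤ sSup ((fun t => ν * x t - t) '' Icc 0 ν) := by
          have : ν * x 0 - 0 ≤ sSup ((fun t => ν * x t - t) '' Icc 0 ν) :=
            le_csSup hbdd ⟨0, ⟨le_rfl, hν.1⟩, rfl⟩
          rw [hx0] at this
          simpa using this
        show ν * x t - t ≤ _
        linarith
  rw [himg, sInf_const_sub _ _ hne hbdd, hsup, Q_eq hmono hx0 hx1 hconc hν]


end Qfacts

variable {N : ℕ} {k : Fin N → ℝ}

lemma amb_ae {P : Measure ℝ} (h : MemAmbN k P) : ∀ᵐ ν ∂P, ν ∈ Icc (0:ℝ) 1 := by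
  rw [ae_iff]
  have : {ν : ℝ | ¬ ν ∈ Icc (0:ℝ) 1} = (Icc (0:ℝ) 1)ᶜ := rfl
  rw [this]
  exact h.1.2

lemma integ_bdd {P : Measure ℝ} [IsProbabilityMeasure P] {f : ℝ → ℝ}
    (hf : Measurable f) (h01 : ∀ ν, f ν ∈ Icc (0:ℝ) 1) : Integrable f P := by
  refine (integrable_const (1:ℝ)).mono' hf.aestronglyMeasurable ?_
  filter_upwards with ν
  rw [Real.norm_eq_abs, abs_of_nonneg (h01 ν).1]
  exact (h01 ν).2

/-- the worst case payoff of any feasible mechanism is at most 1 -/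
lemma wc_le_one {P₀ : Measure ℝ} (hP₀ : MemAmbN k P₀) {x p : ℝ → ℝ} (hf : Feasible x p) :
    worstCaseN k p ≤ 1 := by
  haveI : IsProbabilityMeasure P₀ := hP₀.1.1
  have hv : (∫ ν, p ν ∂P₀) ≤ 1 := by
    by_cases hi : Integrable p P₀
    · calc ∫ ν, p ν ∂P₀ ≤ ∫ _, (1:ℝ) ∂P₀ := by
            apply integral_mono_ae hi (integrable_const 1)
            filter_upwards [amb_ae hP₀] with ν hν
            have h1 := hf.ir ν hν
            have h2 := hf.x_mem ν hν
            nlinarith [hν.1, hν.2, h2.1, h2.2]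
        _ = 1 := by simp
    · rw [integral_undef hi]; norm_num
  by_cases hb : BddBelow {v : ℝ | ∃ P : Measure ℝ, MemAmbN k P ∧ v = ∫ ν, p ν ∂P}
  · exact le_trans (csInf_le hb ⟨P₀, hP₀, rfl⟩) hv
  · unfold worstCaseN
    rw [Real.sInf_of_not_bddBelow hb]
    norm_num

lemma wc_le_integral {P : Measure ℝ} (hP : MemAmbN k P) {q : ℝ → ℝ}
    (hq0 : ∀ ν, 0 ≤ q ν) : worstCaseN k q ≤ ∫ ν, q ν ∂P := by
  apply csInf_le
  · refine ⟨0, ?_⟩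
    rintro v ⟨P', _, rfl⟩
    exact integral_nonneg hq0
  · exact ⟨P, hP, rfl⟩

lemma wc_mono {P₀ : Measure ℝ} (hP₀ : MemAmbN k P₀) {p q : ℝ → ℝ}
    (hpq : ∀ ν ∈ Icc (0:ℝ) 1, p ν ≤ q ν) (hqm : Measurable q)
    (hq01 : ∀ ν, q ν ∈ Icc (0:ℝ) 1) :
    worstCaseN k p ≤ worstCaseN k q := by
  unfold worstCaseN
  refine le_csInf ⟨∫ ν, q ν ∂P₀, ⟨P₀, hP₀, rfl⟩⟩ ?_
  rintro v ⟨P, hP, rfl⟩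
  haveI : IsProbabilityMeasure P := hP.1.1
  have hqint : Integrable q P := integ_bdd hqm hq01
  have hqnn : (0:ℝ) ≤ ∫ ν, q ν ∂P := integral_nonneg (fun ν => (hq01 ν).1)
  by_cases hb : BddBelow {v : ℝ | ∃ P : Measure ℝ, MemAmbN k P ∧ v = ∫ ν, p ν ∂P}
  · have h1 : worstCaseN k p ≤ ∫ ν, p ν ∂P := csInf_le hb ⟨P, hP, rfl⟩
    by_cases hpi : Integrable p P
    · refine le_trans h1 (integral_mono_ae hpi hqint ?_)
      filter_upwards [amb_ae hP] with ν hν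
      exact hpq ν hν
    · rw [integral_undef hpi] at h1
      show worstCaseN k p ≤ _
      linarith
  · show worstCaseN k p ≤ _
    unfold worstCaseN
    rw [Real.sInf_of_not_bddBelow hb]
    exact hqnn

lemma zero_feasible : Feasible (fun _ => (0:ℝ)) (fun _ => (0:ℝ)) := by
  refine ⟨measurable_const, measurable_const, fun ν _ => by norm_num, ?_, ?_⟩
  · intro ν hν νh hνh
    simp only [sub_self, mul_zero, zero_add]
    exact hνh.1
  · intro ν hν
    simp

lemma zset_nonempty : {z : ℝ | ∃ x p : ℝ → ℝ, Feasible x p ∧ z = worstCaseN k p}.Nonempty :=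
  ⟨worstCaseN k (fun _ => 0), fun _ => 0, fun _ => 0, zero_feasible, rfl⟩

lemma zset_bddAbove {P₀ : Measure ℝ} (hP₀ : MemAmbN k P₀) :
    BddAbove {z : ℝ | ∃ x p : ℝ → ℝ, Feasible x p ∧ z = worstCaseN k p} := by
  refine ⟨1, ?_⟩
  rintro z ⟨x, p, hf, rfl⟩
  exact wc_le_one hP₀ hf


end RobustAux


namespace RobustAux

lemma min1_lip (a b : ℝ) : |min 1 a - min 1 b| ≤ |a - b| := by
  have h1 := le_abs_self (a - b)
  have h2 := neg_abs_le (a - b)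
  rcases le_total a 1 with ha | ha <;> rcases le_total b 1 with hb | hb
  · rw [min_eq_right ha, min_eq_right hb]
  · rw [min_eq_right ha, min_eq_left hb, abs_le]
    constructor <;> linarith
  · rw [min_eq_left ha, min_eq_right hb, abs_le]
    constructor <;> linarith
  · rw [min_eq_left ha, min_eq_left hb, abs_le]
    constructor <;> linarith

lemma max0_lip (a b : ℝ) : |max 0 a - max 0 b| ≤ |a - b| := by
  have h1 := le_abs_self (a - b)
  have h2 := neg_abs_le (a - b)
  rcases le_total a 0 with ha | ha <;> rcases le_total b 0 with hb | hb
  · rw [max_eq_left ha, max_eq_left hb, abs_le]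
    constructor <;> linarith
  · rw [max_eq_left ha, max_eq_right hb, abs_le]
    constructor <;> linarith
  · rw [max_eq_right ha, max_eq_left hb, abs_le]
    constructor <;> linarith
  · rw [max_eq_right ha, max_eq_right hb]

lemma clip_lip (a b : ℝ) : |max 0 (min 1 a) - max 0 (min 1 b)| ≤ |a - b| :=
  le_trans (max0_lip (min 1 a) (min 1 b)) (min1_lip a b)

lemma clip_mem (a : ℝ) : max 0 (min 1 a) ∈ Icc (0:ℝ) 1 :=
  ⟨le_max_left _ _, max_le zero_le_one (min_le_left _ _)⟩

end RobustAux


/-- There exists a robustly optimal feasible mechanism `(x,p)` whose payment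
rule extracts the maximal feasible payment `p(ν) = inf_{ν̂ ≤ ν} {ν(x(ν)−x(ν̂)) + ν̂}`, and whose
allocation rule is weakly increasing and concave with `x(0) = 0` and `x(1) = 1`. -/
theorem exists_robustly_optimal_mechanism
    {N : ℕ} (k : Fin N → ℝ) (hk : ∀ i, k i ∈ Set.Ioo (0:ℝ) 1)
    (hA : Assumption1 k) :
    ∃ x p : ℝ → ℝ, Feasible x p ∧ worstCaseN k p = zStarN k ∧
      (∀ ν ∈ Set.Icc (0:ℝ) 1,
        p ν = sInf ((fun νh => ν*(x ν - x νh) + νh) '' Set.Icc 0 ν)) ∧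
      MonotoneOn x (Set.Icc 0 1) ∧
      ConcaveOn ℝ (Set.Icc 0 1) x ∧
      x 0 = 0 ∧ x 1 = 1 := by
  classical
  obtain ⟨ε₀, hε₀, hAk⟩ := hA
  obtain ⟨P₀, hP₀⟩ := hAk k hk (by rw [sub_self, norm_zero]; exact hε₀)
  have hSne : {z : ℝ | ∃ x p : ℝ → ℝ, Feasible x p ∧ z = worstCaseN k p}.Nonempty :=
    RobustAux.zset_nonempty
  have hSbdd : BddAbove {z : ℝ | ∃ x p : ℝ → ℝ, Feasible x p ∧ z = worstCaseN k p} :=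
    RobustAux.zset_bddAbove hP₀
  have hzdef : zStarN k
      = sSup {z : ℝ | ∃ x p : ℝ → ℝ, Feasible x p ∧ z = worstCaseN k p} := rfl
  -- a maximizing sequence of feasible mechanisms
  have hseq : ∀ n : ℕ, ∃ xp : (ℝ → ℝ) × (ℝ → ℝ),
      Feasible xp.1 xp.2 ∧ zStarN k - 1/(n+1) < worstCaseN k xp.2 := by
    intro n
    have hpos : (0:ℝ) < 1/(n+1) := by positivity
    have hlt : zStarN k - 1/(n+1)
        < sSup {z : ℝ | ∃ x p : ℝ → ℝ, Feasible x p ∧ z = worstCaseN k p} := by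
      rw [← hzdef]; linarith
    obtain ⟨z, hzS, hzgt⟩ := exists_lt_of_lt_csSup hSne hlt
    obtain ⟨x, p, hf, rfl⟩ := hzS
    exact ⟨(x, p), hf, hzgt⟩
  choose XP hfeas hval using hseq
  -- pass to concavified allocations with maximal payments
  set xb : ℕ → ℝ → ℝ := fun n => RobustAux.env (XP n).1 with hxbdef
  have hxmemn : ∀ n, ∀ t ∈ Icc (0:ℝ) 1, (XP n).1 t ∈ Icc (0:ℝ) 1 := fun n => (hfeas n).x_mem
  have hxbmem : ∀ n ν, xb n ν ∈ Icc (0:ℝ) 1 := fun n ν => RobustAux.env_mem (hxmemn n) ν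
  have hxbmono : ∀ n, Monotone (xb n) := fun n => RobustAux.env_mono (hxmemn n)
  have hxb0 : ∀ n, xb n 0 = 0 := fun n => RobustAux.env_zero
  have hxb1 : ∀ n, xb n 1 = 1 := fun n => RobustAux.env_one (hxmemn n)
  have hxbconc : ∀ n, ConcaveOn ℝ (Icc (0:ℝ) 1) (xb n) := fun n => RobustAux.env_concave (hxmemn n)
  set q : ℕ → ℝ → ℝ := fun n => RobustAux.Qx (xb n) with hqdef
  have hqfeas : ∀ n, Feasible (xb n) (q n) :=
    fun n => RobustAux.Q_feas (hxbmono n) (hxb0 n) (hxb1 n) (hxbconc n)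
  have hqmem : ∀ n ν, q n ν ∈ Icc (0:ℝ) 1 := fun n ν => RobustAux.Q_mem ν
  have hqlip : ∀ n, ∀ a ∈ Icc (0:ℝ) 1, ∀ b ∈ Icc (0:ℝ) 1, |q n a - q n b| ≤ 3*|a-b| :=
    fun n => RobustAux.Q_lip (hxbmono n) (hxb0 n) (hxb1 n) (hxbconc n)
  have hqge : ∀ n, ∀ ν ∈ Icc (0:ℝ) 1, (XP n).2 ν ≤ q n ν := fun n =>
    RobustAux.Q_ge_p (hxbmono n) (hxb0 n) (hxb1 n) (hxbconc n) (RobustAux.env_ic (hfeas n))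
  have hqwc : ∀ n, zStarN k - 1/(n+1) < worstCaseN k (q n) := fun n =>
    lt_of_lt_of_le (hval n) (RobustAux.wc_mono hP₀ (hqge n)
      (RobustAux.Q_meas (hxbmono n) (hxb0 n) (hxb1 n)) (hqmem n))
  -- ultrafilter limits
  set F : Ultrafilter ℕ := Ultrafilter.of atTop with hFdef
  have hFle : (F : Filter ℕ) ≤ atTop := Ultrafilter.of_le _
  haveI hFne : (F : Filter ℕ).NeBot := F.neBot
  have limF : ∀ a : ℕ → ℝ, (∀ n, a n ∈ Icc (0:ℝ) 1) →
      ∃ c ∈ Icc (0:ℝ) 1, Tendsto a (F : Filter ℕ) (nhds c) := by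
    intro a ha
    have h1 : ↑(F.map a) ≤ Filter.principal (Icc (0:ℝ) 1) := by
      rw [Ultrafilter.coe_map, Filter.le_principal_iff, Filter.mem_map]
      exact Filter.univ_mem' ha
    obtain ⟨c, hc, hle⟩ := isCompact_Icc.ultrafilter_le_nhds (F.map a) h1
    refine ⟨c, hc, ?_⟩
    rwa [Ultrafilter.coe_map] at hle
  have hxl : ∀ ν : ℝ, ∃ c ∈ Icc (0:ℝ) 1,
      Tendsto (fun n => xb n ν) (F : Filter ℕ) (nhds c) :=
    fun ν => limF _ (fun n => hxbmem n ν)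
  choose xinf hxinfmem hxinftend using hxl
  have hgl : ∀ ν : ℝ, ∃ c ∈ Icc (0:ℝ) 1,
      Tendsto (fun n => q n (max 0 (min 1 ν))) (F : Filter ℕ) (nhds c) :=
    fun ν => limF _ (fun n => hqmem n _)
  choose G hGmem hGtend using hgl
  have hclip : ∀ ν ∈ Icc (0:ℝ) 1, max (0:ℝ) (min 1 ν) = ν := by
    intro ν hν
    rw [min_eq_right hν.2, max_eq_right hν.1]
  have hGtend' : ∀ ν ∈ Icc (0:ℝ) 1, Tendsto (fun n => q n ν) (F : Filter ℕ) (nhds (G ν)) := by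
    intro ν hν
    have h := hGtend ν
    rwa [hclip ν hν] at h
  -- properties of the limit allocation
  have hxinfmono : Monotone xinf := fun a b hab =>
    le_of_tendsto_of_tendsto' (hxinftend a) (hxinftend b) (fun n => hxbmono n hab)
  have hxinf0 : xinf 0 = 0 := by
    refine tendsto_nhds_unique (hxinftend 0) ?_
    simp only [hxb0]
    exact tendsto_const_nhds
  have hxinf1 : xinf 1 = 1 := by
    refine tendsto_nhds_unique (hxinftend 1) ?_
    simp only [hxb1]
    exact tendsto_const_nhds
  have hxinfconc : ConcaveOn ℝ (Icc (0:ℝ) 1) xinf := by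
    refine ⟨convex_Icc _ _, ?_⟩
    intro a ha b hb s t hs ht hst
    have hcomb : ∀ n, s * xb n a + t * xb n b ≤ xb n (s*a + t*b) := by
      intro n
      have h := (hxbconc n).2 ha hb hs ht hst
      simpa [smul_eq_mul] using h
    have h1 : Tendsto (fun n => s * xb n a + t * xb n b) (F : Filter ℕ)
        (nhds (s * xinf a + t * xinf b)) :=
      ((hxinftend a).const_mul s).add ((hxinftend b).const_mul t)
    have h2 := hxinftend (s*a + t*b)
    simpa [smul_eq_mul] using le_of_tendsto_of_tendsto' h1 h2 hcomb
  -- properties of the limit payment G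
  have hGlip : ∀ a b : ℝ, |G a - G b| ≤ 3 * |a - b| := by
    intro a b
    have h1 : Tendsto (fun n => |q n (max 0 (min 1 a)) - q n (max 0 (min 1 b))|)
        (F : Filter ℕ) (nhds (|G a - G b|)) := ((hGtend a).sub (hGtend b)).abs
    refine le_of_tendsto h1 (Filter.Eventually.of_forall fun n => ?_)
    calc |q n (max 0 (min 1 a)) - q n (max 0 (min 1 b))|
        ≤ 3 * |max 0 (min 1 a) - max 0 (min 1 b)| :=
          hqlip n _ (RobustAux.clip_mem a) _ (RobustAux.clip_mem b)
      _ ≤ 3 * |a - b| := by nlinarith [RobustAux.clip_lip a b]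
  have hGmeas : Measurable G := by
    have hlw : LipschitzWith 3 G := by
      apply LipschitzWith.of_dist_le_mul
      intro a b
      rw [Real.dist_eq, Real.dist_eq]
      have := hGlip a b
      push_cast
      linarith
    exact hlw.continuous.measurable
  have hGQ : ∀ ν ∈ Icc (0:ℝ) 1, G ν ≤ RobustAux.Qx xinf ν := by
    intro ν hν
    rw [RobustAux.Q_eq hxinfmono hxinf0 hxinf1 hxinfconc hν,
      le_sub_iff_add_le, ← le_sub_iff_add_le']
    apply csSup_le (RobustAux.UxSet_nonempty ν)
    rintro e ⟨t, ht, rfl⟩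
    have hle : ∀ n, q n ν ≤ ν * (xb n ν - xb n t) + t := fun n => (hqfeas n).ic ν hν t ht
    have h1 : Tendsto (fun n => ν * (xb n ν - xb n t) + t) (F : Filter ℕ)
        (nhds (ν * (xinf ν - xinf t) + t)) :=
      (((hxinftend ν).sub (hxinftend t)).const_mul ν).add_const t
    have h2 := le_of_tendsto_of_tendsto' (hGtend' ν hν) h1 hle
    simp only
    linarith
  -- the key lower bound on expected payments of the limit mechanism
  have hMain : ∀ P : Measure ℝ, MemAmbN k P → zStarN k ≤ ∫ ν, G ν ∂P := by
    intro P hP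
    haveI : IsProbabilityMeasure P := hP.1.1
    have hGint : Integrable G P := RobustAux.integ_bdd hGmeas hGmem
    have key : ∀ ε : ℝ, 0 < ε → zStarN k ≤ (∫ ν, G ν ∂P) + 8*ε := by
      intro ε hε
      obtain ⟨m, hm⟩ := exists_nat_one_div_lt hε
      set M : ℕ := m + 1 with hMdef
      have hM0 : (0:ℝ) < (M:ℝ) := by positivity
      have hMε : (1:ℝ)/(M:ℝ) < ε := by
        rw [hMdef]
        push_cast
        exact hm
      have hAmem : (⋂ j ∈ Finset.range (M+1),
          {n : ℕ | |q n ((j:ℝ)/(M:ℝ)) - G ((j:ℝ)/(M:ℝ))| < ε}) ∈ (F : Filter ℕ) := by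
        rw [Filter.biInter_finset_mem]
        intro j hj
        have hjM : j ≤ M := Nat.lt_succ_iff.mp (Finset.mem_range.mp hj)
        have hmem : (j:ℝ)/(M:ℝ) ∈ Icc (0:ℝ) 1 :=
          ⟨by positivity, by rw [div_le_one hM0]; exact_mod_cast hjM⟩
        have ht := hGtend' _ hmem
        have h2 := Metric.tendsto_nhds.mp ht ε hε
        simp only [Real.dist_eq] at h2
        exact h2
      have hBmem : {n : ℕ | (1:ℝ)/(n+1) < ε} ∈ (F : Filter ℕ) := by
        apply hFle
        refine Filter.mem_of_superset (Filter.Ici_mem_atTop m) ?_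
        intro n hn
        show (1:ℝ)/(n+1) < ε
        have hle : (1:ℝ)/(n+1) ≤ 1/(m+1) := by
          apply one_div_le_one_div_of_le (by positivity)
          have : (m:ℝ) ≤ n := by exact_mod_cast hn
          linarith
        linarith
      obtain ⟨n₀, hn₀⟩ := Filter.nonempty_of_mem (Filter.inter_mem hAmem hBmem)
      obtain ⟨hn₀A, hn₀B⟩ := hn₀
      have hn₀B' : (1:ℝ)/(n₀+1) < ε := hn₀B
      have hkey : ∀ ν ∈ Icc (0:ℝ) 1, q n₀ ν ≤ G ν + 7*ε := by
        intro ν hν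
        set j : ℕ := ⌊ν * (M:ℝ)⌋₊ with hjdef
        have hjle : (j:ℝ) ≤ ν * (M:ℝ) := Nat.floor_le (mul_nonneg hν.1 (le_of_lt hM0))
        have hνM : ν * (M:ℝ) ≤ (M:ℝ) := by nlinarith [hν.2]
        have hjM : j ≤ M := by
          have h := Nat.floor_le_floor hνM
          rwa [Nat.floor_natCast] at h
        set t : ℝ := (j:ℝ)/(M:ℝ) with htdef
        have htmem : t ∈ Icc (0:ℝ) 1 :=
          ⟨by positivity, by rw [htdef, div_le_one hM0]; exact_mod_cast hjM⟩
        have htν : t ≤ ν := by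
          rw [htdef, div_le_iff₀ hM0]
          nlinarith
        have hd : ν - t < 1/(M:ℝ) := by
          have h2 : ν * (M:ℝ) < (j:ℝ) + 1 := Nat.lt_floor_add_one _
          rw [htdef, sub_lt_iff_lt_add, ← add_div, lt_div_iff₀ hM0]
          nlinarith
        have hdabs : |ν - t| ≤ ε := by
          rw [abs_of_nonneg (by linarith)]
          linarith
        have hAj0 : |q n₀ t - G t| < ε := by
          have h := Set.mem_iInter₂.mp hn₀A j (Finset.mem_range.mpr (Nat.lt_succ_of_le hjM))
          exact h
        have l1 : |q n₀ ν - q n₀ t| ≤ 3*|ν - t| := hqlip n₀ ν hν t htmem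
        have l2 : |G t - G ν| ≤ 3*|t - ν| := hGlip t ν
        have a1 := le_abs_self (q n₀ ν - q n₀ t)
        have a2 := le_abs_self (q n₀ t - G t)
        have a3 := le_abs_self (G t - G ν)
        have a4 : |t - ν| = |ν - t| := abs_sub_comm t ν
        linarith
      have hqint : Integrable (q n₀) P := RobustAux.integ_bdd (hqfeas n₀).meas_p (hqmem n₀)
      have hstep : ∫ ν, q n₀ ν ∂P ≤ (∫ ν, G ν ∂P) + 7*ε := by
        have h1 : ∫ ν, q n₀ ν ∂P ≤ ∫ ν, (G ν + 7*ε) ∂P := by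
          apply integral_mono_ae hqint (hGint.add (integrable_const _))
          filter_upwards [RobustAux.amb_ae hP] with ν hν
          exact hkey ν hν
        rwa [integral_add hGint (integrable_const _), integral_const, probReal_univ,
          one_smul] at h1
      have hwcint : worstCaseN k (q n₀) ≤ ∫ ν, q n₀ ν ∂P :=
        RobustAux.wc_le_integral hP (fun ν => (hqmem n₀ ν).1)
      have hchain := hqwc n₀
      linarith
    by_contra hcon
    push_neg at hcon
    have h := key ((zStarN k - ∫ ν, G ν ∂P)/9) (by linarith)
    linarith
  -- assemble
  have hfeasinf : Feasible xinf (RobustAux.Qx xinf) :=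
    RobustAux.Q_feas hxinfmono hxinf0 hxinf1 hxinfconc
  have hQmeas : Measurable (RobustAux.Qx xinf) := hfeasinf.meas_p
  refine ⟨xinf, RobustAux.Qx xinf, hfeasinf, ?_, ?_, hxinfmono.monotoneOn _,
    hxinfconc, hxinf0, hxinf1⟩
  · apply le_antisymm
    · rw [hzdef]
      exact le_csSup hSbdd ⟨xinf, RobustAux.Qx xinf, hfeasinf, rfl⟩
    · show zStarN k ≤ worstCaseN k (RobustAux.Qx xinf)
      unfold worstCaseN
      refine le_csInf ⟨∫ ν, RobustAux.Qx xinf ν ∂P₀, ⟨P₀, hP₀, rfl⟩⟩ ?_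
      rintro v ⟨P, hP, rfl⟩
      haveI : IsProbabilityMeasure P := hP.1.1
      have h1 : ∫ ν, G ν ∂P ≤ ∫ ν, RobustAux.Qx xinf ν ∂P := by
        apply integral_mono_ae (RobustAux.integ_bdd hGmeas hGmem)
          (RobustAux.integ_bdd hQmeas (fun ν => RobustAux.Q_mem ν))
        filter_upwards [RobustAux.amb_ae hP] with ν hν
        exact hGQ ν hν
      exact le_trans (hMain P hP) h1
  · intro ν hν
    exact RobustAux.Q_formula hxinfmono hxinf0 hxinf1 hxinfconc hν

end
end

section
/- Let k ∈ (0,1)^N satisfy Assumption 1. Let p : [0,1] → ℝ be bounded and Borel measurable, and suppose P* ∈ P_k attains the minimum of ∫ p dP over P ∈ P_k, with minimum value ≥ 0. Then there exists λ = (λ₀, λ₁, …, λ_N) ∈ ℝ^{N+1} such that: (i) p(ν) ≥ Σ_{i=0}^{N} λ_i νⁱ for all ν ∈ [0,1], with equality P*-almost surely; (ii) if additionally p is the payment rule of a feasible mechanism, then λ₀ ≤ 0; and (iii) ∫ p dP* = Σ_{i=0}^{N} λ_i k_i, where k₀ = 1. -/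
open MeasureTheory Set

noncomputable section

/-- The extended moment vector `(k₀, k₁, …, k_N)` with `k₀ = 1`. -/
def kext {N : ℕ} (k : Fin N → ℝ) : Fin (N+1) → ℝ := Fin.cons 1 k

/-- Almost every point of a distribution on `[0,1]` lies in `[0,1]`. -/
lemma aux_ae_Icc {P : Measure ℝ} (h : IsDistOn01 P) :
    ∀ᵐ ν ∂P, ν ∈ Set.Icc (0:ℝ) 1 := by
  rw [MeasureTheory.ae_iff]
  exact h.2

/-- A measurable function bounded on `[0,1]` is integrable w.r.t. a distribution on `[0,1]`. -/
lemma aux_integrable {P : Measure ℝ} (h : IsDistOn01 P) {f : ℝ → ℝ} (hf : Measurable f)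
    {D : ℝ} (hD : ∀ ν ∈ Set.Icc (0:ℝ) 1, |f ν| ≤ D) : Integrable f P := by
  haveI := h.1
  refine Integrable.mono' (integrable_const D) hf.aestronglyMeasurable ?_
  filter_upwards [aux_ae_Icc h] with ν hν
  simpa [Real.norm_eq_abs] using hD ν hν

/-- Powers are integrable w.r.t. a distribution on `[0,1]`. -/
lemma aux_integrable_pow {P : Measure ℝ} (h : IsDistOn01 P) (j : ℕ) :
    Integrable (fun ν : ℝ => ν ^ j) P := by
  refine aux_integrable h (measurable_id.pow_const j) (D := 1) ?_
  intro ν hν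
  rw [abs_pow]
  exact pow_le_one₀ (abs_nonneg ν) (abs_le.2 ⟨by linarith [hν.1], hν.2⟩)


/-- If `p` is bounded and Borel measurable, and `P* ∈ P_k` attains the
minimum of `∫ p dP` over `P ∈ P_k`, with value ≥ 0, then there is a polynomial of degree `N`
minorizing `p`, touching it `P*`-a.s., with nonpositive constant term whenever `p` is the
payment rule of a feasible mechanism, and whose moment evaluation gives the seller's revenue. -/
theorem polynomial_payment_lemma
    {N : ℕ} (k : Fin N → ℝ) (hk : ∀ i, k i ∈ Set.Ioo (0:ℝ) 1)
    (hA : Assumption1 k)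
    (p : ℝ → ℝ) (hmeas : Measurable p)
    (hbd : ∃ C : ℝ, ∀ ν ∈ Set.Icc (0:ℝ) 1, |p ν| ≤ C)
    (Pstar : Measure ℝ) (hPstar : MemAmbN k Pstar)
    (hmin : ∀ P : Measure ℝ, MemAmbN k P → ∫ ν, p ν ∂Pstar ≤ ∫ ν, p ν ∂P)
    (hpos : 0 ≤ ∫ ν, p ν ∂Pstar) :
    ∃ lam : Fin (N+1) → ℝ,
      (∀ ν ∈ Set.Icc (0:ℝ) 1, (∑ i, lam i * ν^(i : ℕ)) ≤ p ν) ∧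
      (∀ᵐ ν ∂Pstar, p ν = ∑ i, lam i * ν^(i : ℕ)) ∧
      ((∃ x : ℝ → ℝ, Feasible x p) → lam 0 ≤ 0) ∧
      (∫ ν, p ν ∂Pstar) = ∑ i, lam i * kext k i := by
  classical
  obtain ⟨C, hC⟩ := hbd
  set v : ℝ := ∫ ν, p ν ∂Pstar with hv
  -- integrability of p w.r.t. any distribution on [0,1]
  have hintp : ∀ P : Measure ℝ, IsDistOn01 P → Integrable p P :=
    fun P h => aux_integrable h hmeas hC
  have hple : ∀ P : Measure ℝ, IsDistOn01 P → ∫ ν, p ν ∂P ≤ C := by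
    intro P h
    haveI := h.1
    have h1 : ‖∫ ν, p ν ∂P‖ ≤ C * (P Set.univ).toReal := by
      refine norm_integral_le_of_norm_le_const ?_
      filter_upwards [aux_ae_Icc h] with ν hν
      simpa [Real.norm_eq_abs] using hC ν hν
    rw [measure_univ] at h1
    simp only [ENNReal.toReal_one, mul_one, Real.norm_eq_abs] at h1
    exact (abs_le.1 h1).2
  -- the convex set S
  set S : Set (ℝ × (Fin N → ℝ)) :=
    {z | ∃ P : Measure ℝ, MemAmbN z.2 P ∧ ∫ ν, p ν ∂P < z.1} with hSdef
  have hSconv : Convex ℝ S := by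
    rintro z₁ ⟨P₁, ⟨hd₁, hm₁⟩, hi₁⟩ z₂ ⟨P₂, ⟨hd₂, hm₂⟩, hi₂⟩ a b ha hb hab
    haveI := hd₁.1; haveI := hd₂.1
    refine ⟨ENNReal.ofReal a • P₁ + ENNReal.ofReal b • P₂, ⟨⟨?_, ?_⟩, ?_⟩, ?_⟩
    · constructor
      rw [Measure.add_apply, Measure.smul_apply, Measure.smul_apply, measure_univ, measure_univ,
        smul_eq_mul, smul_eq_mul, mul_one, mul_one, ← ENNReal.ofReal_add ha hb, hab,
        ENNReal.ofReal_one]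
    · rw [Measure.add_apply, Measure.smul_apply, Measure.smul_apply, hd₁.2, hd₂.2]
      simp
    all_goals {
      have hsplit : ∀ f : ℝ → ℝ, Integrable f P₁ → Integrable f P₂ →
          ∫ ν, f ν ∂(ENNReal.ofReal a • P₁ + ENNReal.ofReal b • P₂)
            = a * ∫ ν, f ν ∂P₁ + b * ∫ ν, f ν ∂P₂ := by
        intro f h1 h2
        rw [integral_add_measure (h1.smul_measure ENNReal.ofReal_ne_top)
            (h2.smul_measure ENNReal.ofReal_ne_top),
          integral_smul_measure, integral_smul_measure,
          ENNReal.toReal_ofReal ha, ENNReal.toReal_ofReal hb, smul_eq_mul, smul_eq_mul]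
      first
      | · intro i
          rw [hsplit _ (aux_integrable_pow hd₁ _) (aux_integrable_pow hd₂ _), hm₁ i, hm₂ i]
          simp [smul_eq_mul]
      | · rw [hsplit p (hintp P₁ hd₁) (hintp P₂ hd₂)]
          have hz1 : (a • z₁ + b • z₂).1 = a * z₁.1 + b * z₂.1 := by simp [smul_eq_mul]
          rw [hz1]
          rcases lt_or_eq_of_le ha with ha' | ha'
          · have h1 : a * ∫ ν, p ν ∂P₁ < a * z₁.1 := mul_lt_mul_of_pos_left hi₁ ha'
            have h2 : b * ∫ ν, p ν ∂P₂ ≤ b * z₂.1 := mul_le_mul_of_nonneg_left hi₂.le hb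
            linarith
          · have hb1 : b = 1 := by linarith
            rw [← ha', hb1]
            simpa using hi₂ }
  -- dirac measures give curve points in S
  have hdirac : ∀ ν ∈ Set.Icc (0:ℝ) 1, ∀ s : ℝ, 0 < s →
      ((p ν + s, fun i : Fin N => ν ^ ((i : ℕ) + 1)) : ℝ × (Fin N → ℝ)) ∈ S := by
    intro ν hν s hs
    refine ⟨Measure.dirac ν, ⟨⟨inferInstance, ?_⟩, ?_⟩, ?_⟩
    · rw [Measure.dirac_apply' _ measurableSet_Icc.compl]
      simp [hν]
    · intro i
      rw [integral_dirac]
    · rw [integral_dirac]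
      simpa using hs
  -- (v, k) is not in S
  have hvkS : ((v, k) : ℝ × (Fin N → ℝ)) ∉ S := by
    rintro ⟨P, hP, hlt⟩
    exact absurd (hmin P hP) (not_le.2 hlt)
  -- nearby moment vectors are feasible: ball × ray inside S
  obtain ⟨ε, hε, hAk⟩ := hA
  have hopen : IsOpen {m : Fin N → ℝ | ∀ i, m i ∈ Set.Ioo (0:ℝ) 1} := by
    have heq : {m : Fin N → ℝ | ∀ i, m i ∈ Set.Ioo (0:ℝ) 1}
        = Set.pi Set.univ (fun _ => Set.Ioo (0:ℝ) 1) := by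
      ext m; simp [Set.mem_pi]
    rw [heq]
    exact isOpen_set_pi Set.finite_univ (fun i _ => isOpen_Ioo)
  obtain ⟨δ₁, hδ₁, hball⟩ := Metric.isOpen_iff.1 hopen k hk
  set δ : ℝ := min δ₁ ε with hδdef
  have hδ : 0 < δ := lt_min hδ₁ hε
  have hUS : Set.Ioi C ×ˢ Metric.ball k δ ⊆ S := by
    rintro ⟨t, m⟩ ⟨ht, hm⟩
    have hm1 : ∀ i, m i ∈ Set.Ioo (0:ℝ) 1 :=
      hball (Metric.ball_subset_ball (min_le_left _ _) hm)
    have hm2 : ‖m - k‖ < ε := by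
      have h1 := Metric.mem_ball.1 hm
      rw [dist_eq_norm] at h1
      exact lt_of_lt_of_le h1 (min_le_right _ _)
    obtain ⟨P, hP⟩ := hAk m hm1 hm2
    exact ⟨P, hP, lt_of_le_of_lt (hple P hP.1) ht⟩
  have hz₀ : ((C + 1, k) : ℝ × (Fin N → ℝ)) ∈ interior S :=
    interior_maximal hUS (isOpen_Ioi.prod Metric.isOpen_ball)
      ⟨lt_add_one C, Metric.mem_ball_self hδ⟩
  -- separation
  obtain ⟨f, hf⟩ := geometric_hahn_banach_open_point hSconv.interior isOpen_interior
    (fun h => hvkS (interior_subset h))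
  have hz₀lt : f (C + 1, k) < f (v, k) := hf _ hz₀
  have hSle : ∀ z ∈ S, f z ≤ f (v, k) := by
    intro z hz
    by_contra hgt
    push_neg at hgt
    have hd : f (C + 1, k) < f z := lt_trans hz₀lt hgt
    set r : ℝ := (f (v, k) - f (C + 1, k)) / (f z - f (C + 1, k)) with hr
    have hden : 0 < f z - f (C + 1, k) := by linarith
    have hr0 : 0 < r := div_pos (by linarith) hden
    have hr1 : r < 1 := (div_lt_one hden).2 (by linarith)
    set t : ℝ := (r + 1) / 2 with htdef
    have ht0 : 0 < t := by simp only [htdef]; linarith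
    have ht1 : t < 1 := by simp only [htdef]; linarith
    have htr : r < t := by simp only [htdef]; linarith
    have hmem := hSconv.combo_interior_self_mem_interior hz₀ hz
      (a := 1 - t) (b := t) (by linarith) ht0.le (by ring)
    have hlt := hf _ hmem
    rw [map_add, _root_.map_smul, _root_.map_smul, smul_eq_mul, smul_eq_mul] at hlt
    have hreq : f (C + 1, k) + r * (f z - f (C + 1, k)) = f (v, k) := by
      rw [hr, div_mul_cancel₀ _ (ne_of_gt hden)]; ring
    nlinarith
  -- decompose f
  set α : ℝ := f (1, (0 : Fin N → ℝ)) with hαdef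
  set φ : (Fin N → ℝ) → ℝ := fun m => f (0, m) with hφdef
  have hsplitf : ∀ (t : ℝ) (m : Fin N → ℝ), f (t, m) = α * t + φ m := by
    intro t m
    have h : ((t, m) : ℝ × (Fin N → ℝ)) = t • ((1:ℝ), (0:Fin N → ℝ)) + ((0:ℝ), m) := by
      simp [Prod.ext_iff]
    rw [h, map_add, _root_.map_smul, smul_eq_mul, mul_comm]
  have hφsum : ∀ m : Fin N → ℝ, φ m = ∑ i, m i * φ (Pi.single i 1) := by
    intro m
    have h : ((0:ℝ), m) = ∑ i : Fin N, (m i) • (((0:ℝ), Pi.single i (1:ℝ)) : ℝ × (Fin N → ℝ)) := by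
      have hs : ∑ i : Fin N, (m i) • (((0:ℝ), Pi.single i (1:ℝ)) : ℝ × (Fin N → ℝ))
          = ∑ i : Fin N, (((0:ℝ), Pi.single i (m i)) : ℝ × (Fin N → ℝ)) := by
        refine Finset.sum_congr rfl fun i _ => ?_
        rw [Prod.smul_mk, smul_zero]
        congr 1
        rw [← Pi.single_smul, smul_eq_mul, mul_one]
      rw [hs, Prod.ext_iff, Prod.fst_sum, Prod.snd_sum]
      constructor
      · simp
      · simp [Finset.univ_sum_single]
    simp only [hφdef]
    rw [h, map_sum]
    simp only [_root_.map_smul, smul_eq_mul]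
  -- α < 0
  have h0Icc : (0:ℝ) ∈ Set.Icc (0:ℝ) 1 := ⟨le_refl _, zero_le_one⟩
  have hαle : α ≤ 0 := by
    by_contra hpos'
    push_neg at hpos'
    set B : ℝ := α * v + φ k - (α * p 0 + φ (fun i : Fin N => (0:ℝ) ^ ((i : ℕ) + 1))) with hB
    have hs : ∀ s : ℝ, 0 < s → α * s ≤ B := by
      intro s hs'
      have h1 := hSle _ (hdirac 0 h0Icc s hs')
      rw [hsplitf] at h1
      rw [mul_add] at h1
      have h2 := hsplitf v k
      simp only [hB]
      linarith
    have h1 := hs 1 one_pos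
    rw [mul_one] at h1
    have hBpos : 0 < B / α := div_pos (lt_of_lt_of_le hpos' h1) hpos'
    have h2 := hs (B / α + 1) (by linarith)
    rw [mul_add, mul_one, mul_div_cancel₀ B (ne_of_gt hpos')] at h2
    linarith
  have hαne : α ≠ 0 := by
    intro h0
    rw [hsplitf (C+1) k, hsplitf v k, h0] at hz₀lt
    simp at hz₀lt
  have hαneg : α < 0 := lt_of_le_of_ne hαle hαne
  -- key pointwise inequality
  have hkey : ∀ ν ∈ Set.Icc (0:ℝ) 1,
      α * p ν + φ (fun i : Fin N => ν ^ ((i : ℕ) + 1)) ≤ α * v + φ k := by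
    intro ν hν
    apply le_of_forall_pos_le_add
    intro ε' hε'
    have hspos : 0 < ε' / (-α) := div_pos hε' (by linarith)
    have h1 := hSle _ (hdirac ν hν _ hspos)
    rw [hsplitf, mul_add] at h1
    have h2 : α * (ε' / (-α)) = -ε' := by
      rw [div_neg, mul_neg, ← mul_div_assoc, mul_div_cancel_left₀ _ hαne]
    have h3 := hsplitf v k
    linarith
  -- the multiplier
  set lam : Fin (N+1) → ℝ :=
    Fin.cons (v + φ k / α) (fun i => -(φ (Pi.single i 1)) / α) with hlamdef
  have hpoly : ∀ ν : ℝ, (∑ i : Fin (N+1), lam i * ν ^ (i : ℕ))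
      = v + φ k / α - φ (fun i : Fin N => ν ^ ((i : ℕ) + 1)) / α := by
    intro ν
    rw [Fin.sum_univ_succ]
    simp only [hlamdef, Fin.cons_zero, Fin.cons_succ, Fin.val_zero, pow_zero, mul_one,
      Fin.val_succ]
    rw [hφsum (fun i : Fin N => ν ^ ((i : ℕ) + 1)), Finset.sum_div]
    have h1 : ∀ i : Fin N, (-(φ (Pi.single i 1)) / α) * ν ^ ((i : ℕ) + 1)
        = -((ν ^ ((i : ℕ) + 1) * φ (Pi.single i 1)) / α) := by
      intro i; ring
    rw [Finset.sum_congr rfl (fun i _ => h1 i), Finset.sum_neg_distrib]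
    ring
  -- (i) pointwise minorant
  have hminor : ∀ ν ∈ Set.Icc (0:ℝ) 1, (∑ i : Fin (N+1), lam i * ν ^ (i : ℕ)) ≤ p ν := by
    intro ν hν
    rw [hpoly]
    have h1 := hkey ν hν
    have h2 : (φ k - φ (fun i : Fin N => ν ^ ((i : ℕ) + 1))) / α ≤ p ν - v := by
      rw [div_le_iff_of_neg hαneg]
      nlinarith
    rw [sub_div] at h2
    linarith
  -- (iii) the moment identity
  have hkext : ∑ i : Fin (N+1), lam i * kext k i = v := by
    rw [Fin.sum_univ_succ]
    simp only [hlamdef, kext, Fin.cons_zero, Fin.cons_succ, mul_one]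
    rw [hφsum k, Finset.sum_div]
    have h1 : ∀ i : Fin N, (-(φ (Pi.single i 1)) / α) * k i
        = -((k i * φ (Pi.single i 1)) / α) := by
      intro i; ring
    rw [Finset.sum_congr rfl (fun i _ => h1 i), Finset.sum_neg_distrib]
    ring
  refine ⟨lam, hminor, ?_, ?_, hkext.symm⟩
  · -- a.s. equality
    haveI : IsProbabilityMeasure Pstar := hPstar.1.1
    have hintp' : Integrable p Pstar := hintp Pstar hPstar.1
    have hintpoly : Integrable (fun ν => ∑ i : Fin (N+1), lam i * ν ^ (i : ℕ)) Pstar := by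
      apply integrable_finset_sum
      intro i _
      exact (aux_integrable_pow hPstar.1 (i : ℕ)).const_mul _
    have hIpoly : ∫ ν, (∑ i : Fin (N+1), lam i * ν ^ (i : ℕ)) ∂Pstar
        = ∑ i : Fin (N+1), lam i * kext k i := by
      have hfs := MeasureTheory.integral_finset_sum (μ := Pstar) Finset.univ
        (f := fun (i : Fin (N+1)) (ν : ℝ) => lam i * ν ^ (i : ℕ))
        (fun i _ => (aux_integrable_pow hPstar.1 (i : ℕ)).const_mul _)
      rw [hfs]
      refine Finset.sum_congr rfl fun i _ => ?_
      rw [MeasureTheory.integral_const_mul]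
      congr 1
      induction i using Fin.cases with
      | zero => simp [kext]
      | succ j => simpa [kext, Fin.val_succ] using hPstar.2 j
    have hg0 : ∫ ν, (p ν - ∑ i : Fin (N+1), lam i * ν ^ (i : ℕ)) ∂Pstar = 0 := by
      rw [integral_sub hintp' hintpoly, hIpoly, hkext]
      simp [hv]
    have hgnn : 0 ≤ᵐ[Pstar] fun ν => p ν - ∑ i : Fin (N+1), lam i * ν ^ (i : ℕ) := by
      filter_upwards [aux_ae_Icc hPstar.1] with ν hν
      have := hminor ν hν
      simp only [Pi.zero_apply, sub_nonneg]
      exact this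
    have hzero := (integral_eq_zero_iff_of_nonneg_ae hgnn (hintp'.sub hintpoly)).1 hg0
    filter_upwards [hzero] with ν hν
    have : p ν - ∑ i : Fin (N+1), lam i * ν ^ (i : ℕ) = 0 := hν
    linarith
  · -- λ₀ ≤ 0 under feasibility
    rintro ⟨x, hfeas⟩
    have hp0 : p 0 ≤ 0 := by
      have := hfeas.ir 0 h0Icc
      simpa using this
    have h1 := hminor 0 h0Icc
    have h2 : (∑ i : Fin (N+1), lam i * (0:ℝ) ^ (i : ℕ)) = lam 0 := by
      rw [Fin.sum_univ_succ]
      simp [Fin.val_succ]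
    rw [h2] at h1
    linarith

end
end

section
/- Let J ∈ ℕ, J ≥ 1, and let K ∈ (0,1)^{N×J} satisfy Assumption 2. Let (x,p) be a J-agent mechanism whose aggregate payment ν ↦ Σ_{j=1}^{J} p_j(ν) is bounded and Borel measurable, and suppose P* ∈ P_K attains the minimum of ∫ Σ_{j=1}^{J} p_j(ν) dP(ν) over P ∈ P_K, with minimum value ≥ 0. Then there exist λ₀ ∈ ℝ and λ_{ij} ∈ ℝ for i = 1,…,N, j = 1,…,J such that: (i) Σ_{j=1}^{J} p_j(ν) ≥ Σ_{i=1}^{N} Σ_{j=1}^{J} λ_{ij} ν_jⁱ + λ₀ for all ν ∈ [0,1]^J, with equality P*-almost surely; (ii) if (x,p) is feasible then λ₀ ≤ 0; and (iii) ∫ Σ_{j=1}^{J} p_j dP* = Σ_{i=1}^{N} Σ_{j=1}^{J} λ_{ij} K_{ij} + λ₀. -/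
open MeasureTheory Set Filter Topology

noncomputable section

/-- The type cube `[0,1]^J`. -/
def cube (J : ℕ) : Set (Fin J → ℝ) := {ν | ∀ j, ν j ∈ Set.Icc (0:ℝ) 1}

/-- A Borel probability measure on `ℝ^J` supported on `[0,1]^J`. -/
def IsDistOnCube {J : ℕ} (P : Measure (Fin J → ℝ)) : Prop :=
  IsProbabilityMeasure P ∧ P (cube J)ᶜ = 0

/-- Membership in the multi-agent moment ambiguity set `P_K`. -/
def MemAmbK {N J : ℕ} (K : Fin N → Fin J → ℝ) (P : Measure (Fin J → ℝ)) : Prop :=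
  IsDistOnCube P ∧ ∀ (i : Fin N) (j : Fin J), ∫ ν, (ν j)^((i : ℕ) + 1) ∂P = K i j

/-- Assumption 2: the ambiguity set is nonempty for all nearby moment matrices. -/
def Assumption2 {N J : ℕ} (K : Fin N → Fin J → ℝ) : Prop :=
  ∃ ε > 0, ∀ Kh : Fin N → Fin J → ℝ, (∀ i j, Kh i j ∈ Set.Ioo (0:ℝ) 1) → ‖Kh - K‖ < ε →
    ∃ P : Measure (Fin J → ℝ), MemAmbK Kh P

/-- A `J`-agent mechanism: measurable allocation and payment rules, nonnegative allocations
summing to at most one. -/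
structure MechanismJ {J : ℕ} (x p : Fin J → (Fin J → ℝ) → ℝ) : Prop where
  meas_x : ∀ j, Measurable (x j)
  meas_p : ∀ j, Measurable (p j)
  x_nonneg : ∀ j, ∀ ν ∈ cube J, 0 ≤ x j ν
  x_sum : ∀ ν ∈ cube J, (∑ j, x j ν) ≤ 1

/-- Feasibility: dominant-strategy incentive compatibility and ex-post individual
rationality. -/
structure FeasibleJ {J : ℕ} (x p : Fin J → (Fin J → ℝ) → ℝ)
    extends MechanismJ x p : Prop where
  ic : ∀ j, ∀ ν ∈ cube J, ∀ νh ∈ Set.Icc (0:ℝ) 1,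
    p j ν ≤ ν j * (x j ν - x j (Function.update ν j νh)) + νh
  ir : ∀ j, ∀ ν ∈ cube J, p j ν ≤ ν j * x j ν

lemma cube_isClosed (J : ℕ) : IsClosed (cube J) := by
  have : cube J = ⋂ j, (fun ν : Fin J → ℝ => ν j) ⁻¹' Set.Icc 0 1 := by
    ext ν; simp [cube]
  rw [this]
  exact isClosed_iInter fun j => isClosed_Icc.preimage (continuous_apply j)

lemma ae_mem_cube {J : ℕ} {P : Measure (Fin J → ℝ)} (h : IsDistOnCube P) :
    ∀ᵐ ν ∂P, ν ∈ cube J := by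
  rw [ae_iff]
  simpa [Set.compl_def] using h.2

lemma integrable_of_bdd {J : ℕ} {P : Measure (Fin J → ℝ)} (h : IsDistOnCube P)
    {f : (Fin J → ℝ) → ℝ} (hf : Measurable f) {C : ℝ} (hC : ∀ ν ∈ cube J, |f ν| ≤ C) :
    Integrable f P := by
  haveI := h.1
  refine Integrable.mono' (integrable_const C) hf.aestronglyMeasurable ?_
  filter_upwards [ae_mem_cube h] with ν hν
  simpa [Real.norm_eq_abs] using hC ν hν

lemma mom_bdd {J : ℕ} {ν : Fin J → ℝ} (hν : ν ∈ cube J) (j : Fin J) (n : ℕ) :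
    |(ν j)^n| ≤ 1 := by
  rw [abs_pow]
  exact pow_le_one₀ (abs_nonneg _) (abs_le.2 ⟨by linarith [(hν j).1], (hν j).2⟩)

lemma integral_le_bdd {J : ℕ} {P : Measure (Fin J → ℝ)} (h : IsDistOnCube P)
    {f : (Fin J → ℝ) → ℝ} (hf : Measurable f) {C : ℝ} (hC : ∀ ν ∈ cube J, |f ν| ≤ C) :
    ∫ ν, f ν ∂P ≤ C := by
  haveI := h.1
  calc ∫ ν, f ν ∂P ≤ ∫ _, C ∂P := by
        refine integral_mono_ae (integrable_of_bdd h hf hC) (integrable_const C) ?_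
        filter_upwards [ae_mem_cube h] with ν hν
        exact (abs_le.1 (hC ν hν)).2
    _ = C := by simp

lemma pi_decomp {N J : ℕ} (m : Fin N → Fin J → ℝ) :
    (∑ i, ∑ j, m i j • (Pi.single i (Pi.single j (1:ℝ)) : Fin N → Fin J → ℝ)) = m := by
  funext i' j'
  simp only [Finset.sum_apply, Pi.smul_apply, Pi.single_apply, smul_eq_mul, apply_ite,
    ite_apply, Pi.zero_apply, mul_ite, mul_one, mul_zero]
  rw [Finset.sum_eq_single i']
  · rw [Finset.sum_eq_single j']
    · simp
    · intro b _ hb; simp [Ne.symm hb]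
    · simp
  · intro b _ hb; simp [Ne.symm hb]
  · simp

/-- Multi-agent polynomial payment lemma: if the aggregate payment of a
mechanism is bounded and `P* ∈ P_K` attains the minimum (≥ 0) of its expectation over `P_K`,
then the aggregate payment dominates a multi-dimensional polynomial, touching it `P*`-a.s.,
with nonpositive constant term under feasibility, and the polynomial's moment evaluation
gives the seller's revenue. -/
theorem polynomial_payment_lemma_multiAgent
    {N J : ℕ} (hJ : 1 ≤ J) (K : Fin N → Fin J → ℝ)
    (hK : ∀ i j, K i j ∈ Set.Ioo (0:ℝ) 1) (hA : Assumption2 K)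
    (x p : Fin J → (Fin J → ℝ) → ℝ) (hmech : MechanismJ x p)
    (hbd : ∃ C : ℝ, ∀ ν ∈ cube J, |∑ j, p j ν| ≤ C)
    (Pstar : Measure (Fin J → ℝ)) (hPstar : MemAmbK K Pstar)
    (hmin : ∀ P : Measure (Fin J → ℝ), MemAmbK K P →
      ∫ ν, ∑ j, p j ν ∂Pstar ≤ ∫ ν, ∑ j, p j ν ∂P)
    (hpos : 0 ≤ ∫ ν, ∑ j, p j ν ∂Pstar) :
    ∃ (lam0 : ℝ) (lam : Fin N → Fin J → ℝ),
      (∀ ν ∈ cube J,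
        (∑ i, ∑ j, lam i j * (ν j)^((i : ℕ) + 1)) + lam0 ≤ ∑ j, p j ν) ∧
      (∀ᵐ ν ∂Pstar,
        (∑ j, p j ν) = (∑ i, ∑ j, lam i j * (ν j)^((i : ℕ) + 1)) + lam0) ∧
      (FeasibleJ x p → lam0 ≤ 0) ∧
      (∫ ν, ∑ j, p j ν ∂Pstar) = (∑ i, ∑ j, lam i j * K i j) + lam0 := by
  obtain ⟨C, hC⟩ := hbd
  obtain ⟨ε, hε, hAK⟩ := hA
  set f : (Fin J → ℝ) → ℝ := fun ν => ∑ j, p j ν with hf_def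
  have hfmeas : Measurable f := Finset.measurable_sum _ fun j _ => hmech.meas_p j
  set V : ℝ := ∫ ν, f ν ∂Pstar with hV_def
  have hmom_meas : ∀ (i : Fin N) (j : Fin J),
      Measurable (fun ν : Fin J → ℝ => (ν j)^((i:ℕ)+1)) :=
    fun i j => (measurable_pi_apply j).pow_const _
  have hmom_int : ∀ (P : Measure (Fin J → ℝ)), IsDistOnCube P → ∀ (i : Fin N) (j : Fin J),
      Integrable (fun ν => (ν j)^((i:ℕ)+1)) P :=
    fun P hP i j => integrable_of_bdd hP (hmom_meas i j) (fun ν hν => mom_bdd hν j _)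
  have hf_int : ∀ (P : Measure (Fin J → ℝ)), IsDistOnCube P → Integrable f P :=
    fun P hP => integrable_of_bdd hP hfmeas hC
  have hf_le : ∀ (P : Measure (Fin J → ℝ)), IsDistOnCube P → ∫ ν, f ν ∂P ≤ C :=
    fun P hP => integral_le_bdd hP hfmeas hC
  have hVC : V ≤ C := hf_le Pstar hPstar.1
  -- the convex set
  set S : Set ((Fin N → Fin J → ℝ) × ℝ) :=
    {q | ∃ P : Measure (Fin J → ℝ), IsDistOnCube P ∧
      (∀ (i : Fin N) (j : Fin J), ∫ ν, (ν j)^((i:ℕ)+1) ∂P = q.1 i j) ∧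
      ∫ ν, f ν ∂P ≤ q.2} with hS_def
  have hSconv : Convex ℝ S := by
    rintro q1 ⟨P1, hP1, hm1, hi1⟩ q2 ⟨P2, hP2, hm2, hi2⟩ a b ha hb hab
    haveI := hP1.1; haveI := hP2.1
    refine ⟨ENNReal.ofReal a • P1 + ENNReal.ofReal b • P2, ⟨⟨?_⟩, ?_⟩, ?_, ?_⟩
    · simp only [Measure.add_apply, Measure.smul_apply, smul_eq_mul, measure_univ, mul_one]
      rw [← ENNReal.ofReal_add ha hb, hab, ENNReal.ofReal_one]
    · simp [Measure.add_apply, Measure.smul_apply, hP1.2, hP2.2]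
    all_goals {
      have key : ∀ g : (Fin J → ℝ) → ℝ, Integrable g P1 → Integrable g P2 →
          ∫ ν, g ν ∂(ENNReal.ofReal a • P1 + ENNReal.ofReal b • P2)
            = a * ∫ ν, g ν ∂P1 + b * ∫ ν, g ν ∂P2 := by
        intro g hg1 hg2
        rw [integral_add_measure (hg1.smul_measure ENNReal.ofReal_ne_top)
            (hg2.smul_measure ENNReal.ofReal_ne_top),
          integral_smul_measure, integral_smul_measure,
          ENNReal.toReal_ofReal ha, ENNReal.toReal_ofReal hb]
        simp [smul_eq_mul]
      first
      | exact fun i j => by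
          rw [key _ (hmom_int P1 hP1 i j) (hmom_int P2 hP2 i j), hm1 i j, hm2 i j]
          simp [Prod.smul_fst, Prod.fst_add]
      | · rw [key f (hf_int P1 hP1) (hf_int P2 hP2)]
          have : (a • q1 + b • q2).2 = a * q1.2 + b * q2.2 := by simp [smul_eq_mul]
          rw [this]
          exact add_le_add (mul_le_mul_of_nonneg_left hi1 ha)
            (mul_le_mul_of_nonneg_left hi2 hb) }
  -- (K, V) ∈ S
  have hKV_mem : ((K, V) : (Fin N → Fin J → ℝ) × ℝ) ∈ S :=
    ⟨Pstar, hPstar.1, hPstar.2, le_refl _⟩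
  -- interior point
  have hU_sub : ∀ (Kh : Fin N → Fin J → ℝ) (t : ℝ), (∀ i j, Kh i j ∈ Set.Ioo (0:ℝ) 1) →
      ‖Kh - K‖ < ε → C ≤ t → ((Kh, t) : (Fin N → Fin J → ℝ) × ℝ) ∈ S := by
    intro Kh t h1 h2 h3
    obtain ⟨P, hPd, hPm⟩ := hAK Kh h1 h2
    exact ⟨P, hPd, hPm, le_trans (hf_le P hPd) h3⟩
  set U : Set ((Fin N → Fin J → ℝ) × ℝ) :=
    {q | (∀ i j, q.1 i j ∈ Set.Ioo (0:ℝ) 1) ∧ ‖q.1 - K‖ < ε ∧ C < q.2} with hU_def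
  have hU_open : IsOpen U := by
    have h1 : IsOpen {q : (Fin N → Fin J → ℝ) × ℝ | ∀ i j, q.1 i j ∈ Set.Ioo (0:ℝ) 1} := by
      have : {q : (Fin N → Fin J → ℝ) × ℝ | ∀ i j, q.1 i j ∈ Set.Ioo (0:ℝ) 1}
          = ⋂ i, ⋂ j, (fun q : (Fin N → Fin J → ℝ) × ℝ => q.1 i j) ⁻¹' Set.Ioo 0 1 := by
        ext q; simp
      rw [this]
      exact isOpen_iInter_of_finite fun i => isOpen_iInter_of_finite fun j =>
        (isOpen_Ioo.preimage (by fun_prop))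
    have h2 : IsOpen {q : (Fin N → Fin J → ℝ) × ℝ | ‖q.1 - K‖ < ε} :=
      isOpen_lt ((continuous_fst.sub continuous_const).norm) continuous_const
    have h3 : IsOpen {q : (Fin N → Fin J → ℝ) × ℝ | C < q.2} :=
      isOpen_lt continuous_const continuous_snd
    exact (h1.inter (h2.inter h3))
  have hU_in_S : U ⊆ S := fun q hq => by
    obtain ⟨h1, h2, h3⟩ := hq
    have := hU_sub q.1 q.2 h1 h2 h3.le
    simpa using this
  have hu_int : ((K, C+1) : (Fin N → Fin J → ℝ) × ℝ) ∈ interior S := by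
    apply interior_mono hU_in_S
    rw [hU_open.interior_eq]
    refine ⟨hK, by simpa using hε, ?_⟩
    show C < C + 1
    linarith
  -- (K,V) not in interior S
  have hKV_not : ((K, V) : (Fin N → Fin J → ℝ) × ℝ) ∉ interior S := by
    intro hmem
    obtain ⟨r, hr, hball⟩ := Metric.isOpen_iff.1 isOpen_interior _ hmem
    have hdist : dist ((K, V - r/2) : (Fin N → Fin J → ℝ) × ℝ) ((K, V) : (Fin N → Fin J → ℝ) × ℝ) < r := by
      rw [Prod.dist_eq]
      apply max_lt
      · simpa using hr
      · show dist (V - r/2) V < r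
        rw [Real.dist_eq]
        have : |V - r/2 - V| = r/2 := by rw [abs_of_nonpos (by linarith)]; ring
        rw [this]; linarith
    have hin : ((K, V - r/2) : (Fin N → Fin J → ℝ) × ℝ) ∈ S :=
      interior_subset (hball (Metric.mem_ball.2 hdist))
    obtain ⟨P, hPd, hPm, hPi⟩ := hin
    have := hmin P ⟨hPd, hPm⟩
    have hPi' : integral P f ≤ V - r/2 := hPi
    linarith
  -- separation
  obtain ⟨φ, hφ⟩ := geometric_hahn_banach_open_point hSconv.interior isOpen_interior hKV_not
  -- φ a ≤ φ (K, V) for a ∈ S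
  have hφS : ∀ a ∈ S, φ a ≤ φ (K, V) := by
    intro a ha
    have hlim : Tendsto (fun t : ℝ => φ a + t * (φ ((K, C+1) : (Fin N → Fin J → ℝ) × ℝ) - φ a))
        (𝓝[>] (0:ℝ)) (𝓝 (φ a)) := by
      have : Tendsto (fun t : ℝ => φ a + t * (φ ((K, C+1) : (Fin N → Fin J → ℝ) × ℝ) - φ a))
          (𝓝 (0:ℝ)) (𝓝 (φ a + 0 * (φ ((K, C+1) : (Fin N → Fin J → ℝ) × ℝ) - φ a))) :=
        (tendsto_const_nhds.add ((tendsto_id).mul tendsto_const_nhds))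
      simpa using this.mono_left nhdsWithin_le_nhds
    refine le_of_tendsto hlim ?_
    filter_upwards [Ioc_mem_nhdsGT_of_mem (Set.mem_Ico.2 ⟨le_refl (0:ℝ), zero_lt_one⟩)]
      with t ht
    have hmem := hSconv.add_smul_sub_mem_interior ha hu_int ht
    have := hφ _ hmem
    calc φ a + t * (φ ((K, C+1) : (Fin N → Fin J → ℝ) × ℝ) - φ a)
        = φ (a + t • (((K, C+1) : (Fin N → Fin J → ℝ) × ℝ) - a)) := by
          rw [map_add, _root_.map_smul]; simp [map_sub]
      _ ≤ φ (K, V) := (this).le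
  set μ : ℝ := φ ((0, 1) : (Fin N → Fin J → ℝ) × ℝ) with hμ_def
  set lam' : Fin N → Fin J → ℝ :=
    fun i j => φ ((Pi.single i (Pi.single j (1:ℝ)), 0) : (Fin N → Fin J → ℝ) × ℝ)
    with hlam'_def
  have hφ_eq : ∀ (m : Fin N → Fin J → ℝ) (t : ℝ),
      φ ((m, t) : (Fin N → Fin J → ℝ) × ℝ) = (∑ i, ∑ j, lam' i j * m i j) + t * μ := by
    intro m t
    have hsplit : ((m, t) : (Fin N → Fin J → ℝ) × ℝ)
        = ((m, 0) : (Fin N → Fin J → ℝ) × ℝ) + t • ((0, 1) : (Fin N → Fin J → ℝ) × ℝ) := by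
      simp [Prod.ext_iff]
    have hm : ((m, 0) : (Fin N → Fin J → ℝ) × ℝ)
        = ∑ i, ∑ j, m i j •
          ((Pi.single i (Pi.single j (1:ℝ)), 0) : (Fin N → Fin J → ℝ) × ℝ) := by
      rw [Prod.ext_iff]
      constructor
      · simp only [Prod.fst_sum, Prod.smul_fst]
        exact (pi_decomp m).symm
      · simp [Prod.snd_sum]
    rw [hsplit, map_add, _root_.map_smul, hm, map_sum]
    simp only [map_sum, _root_.map_smul, smul_eq_mul]
    rw [← hμ_def]
    congr 1
    exact Finset.sum_congr rfl fun i _ => Finset.sum_congr rfl fun j _ => by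
      rw [mul_comm]
  -- μ < 0
  have hμ_neg : μ < 0 := by
    have h1 := hφ _ hu_int
    rw [hφ_eq K (C+1), hφ_eq K V] at h1
    have : (C + 1) * μ < V * μ := by linarith
    nlinarith [hVC]
  set lam : Fin N → Fin J → ℝ := fun i j => lam' i j / (-μ) with hlam_def
  have hlam' : ∀ i j, lam' i j = (-μ) * lam i j := by
    intro i j
    have hμne : μ ≠ 0 := hμ_neg.ne
    rw [hlam_def]
    field_simp
  set lam0 : ℝ := V - ∑ i, ∑ j, lam i j * K i j with hlam0_def
  -- master inequality: for any P dist on cube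
  have hmaster : ∀ (m : Fin N → Fin J → ℝ) (t : ℝ),
      ((m, t) : (Fin N → Fin J → ℝ) × ℝ) ∈ S →
      (∑ i, ∑ j, lam i j * m i j) + lam0 ≤ t := by
    intro m t hmem
    have h1 := hφS _ hmem
    rw [hφ_eq m t, hφ_eq K V] at h1
    have e1 : (∑ i, ∑ j, lam' i j * m i j) = (-μ) * ∑ i, ∑ j, lam i j * m i j := by
      rw [Finset.mul_sum]
      refine Finset.sum_congr rfl fun i _ => ?_
      rw [Finset.mul_sum]
      exact Finset.sum_congr rfl fun j _ => by rw [hlam' i j]; ring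
    have e2 : (∑ i, ∑ j, lam' i j * K i j) = (-μ) * ∑ i, ∑ j, lam i j * K i j := by
      rw [Finset.mul_sum]
      refine Finset.sum_congr rfl fun i _ => ?_
      rw [Finset.mul_sum]
      exact Finset.sum_congr rfl fun j _ => by rw [hlam' i j]; ring
    rw [e1, e2] at h1
    rw [hlam0_def]
    set A := ∑ i, ∑ j, lam i j * m i j
    set B := ∑ i, ∑ j, lam i j * K i j
    nlinarith [h1, hμ_neg]
  -- pointwise inequality via Dirac measures
  have hpoint : ∀ ν ∈ cube J, (∑ i, ∑ j, lam i j * (ν j)^((i:ℕ)+1)) + lam0 ≤ f ν := by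
    intro ν hν
    refine hmaster _ _ ⟨Measure.dirac ν, ⟨inferInstance, ?_⟩, ?_, ?_⟩
    · rw [Measure.dirac_apply' _ (cube_isClosed J).measurableSet.compl]
      simp [Set.indicator_apply, hν]
    · intro i j
      simp [integral_dirac]
    · simp [integral_dirac]
  refine ⟨lam0, lam, hpoint, ?_, ?_, ?_⟩
  · -- a.e. equality
    haveI := hPstar.1.1
    set g : (Fin J → ℝ) → ℝ :=
      fun ν => f ν - ((∑ i, ∑ j, lam i j * (ν j)^((i:ℕ)+1)) + lam0) with hg_def
    have hpoly_int : Integrable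
        (fun ν => (∑ i, ∑ j, lam i j * (ν j)^((i:ℕ)+1)) + lam0) Pstar := by
      refine Integrable.add ?_ (integrable_const lam0)
      refine integrable_finset_sum _ fun i _ => integrable_finset_sum _ fun j _ => ?_
      exact (hmom_int Pstar hPstar.1 i j).const_mul _
    have hg_int : Integrable g Pstar := (hf_int Pstar hPstar.1).sub hpoly_int
    have hg_nonneg : 0 ≤ᵐ[Pstar] g := by
      filter_upwards [ae_mem_cube hPstar.1] with ν hν
      simp only [hg_def, Pi.zero_apply]
      linarith [hpoint ν hν]
    have hpoly_integral :
        ∫ ν, ((∑ i, ∑ j, lam i j * (ν j)^((i:ℕ)+1)) + lam0) ∂Pstar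
          = (∑ i, ∑ j, lam i j * K i j) + lam0 := by
      rw [integral_add (by
        refine integrable_finset_sum _ fun i _ => integrable_finset_sum _ fun j _ => ?_
        exact (hmom_int Pstar hPstar.1 i j).const_mul _) (integrable_const lam0)]
      rw [integral_const]
      simp only [measure_univ, probReal_univ, ENNReal.toReal_one, smul_eq_mul, one_mul]
      congr 1
      rw [integral_finset_sum _ fun i _ => integrable_finset_sum _ fun j _ =>
        (hmom_int Pstar hPstar.1 i j).const_mul _]
      refine Finset.sum_congr rfl fun i _ => ?_
      rw [integral_finset_sum _ fun j _ => (hmom_int Pstar hPstar.1 i j).const_mul _]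
      refine Finset.sum_congr rfl fun j _ => ?_
      rw [integral_const_mul, hPstar.2 i j]
    have hg_zero : ∫ ν, g ν ∂Pstar = 0 := by
      rw [hg_def]
      simp only
      rw [integral_sub (hf_int Pstar hPstar.1) hpoly_int, hpoly_integral, ← hV_def]
      rw [hlam0_def]
      ring
    have := (integral_eq_zero_iff_of_nonneg_ae hg_nonneg hg_int).1 hg_zero
    filter_upwards [this] with ν hν
    have : g ν = 0 := hν
    simp only [hg_def] at this
    linarith
  · -- lam0 ≤ 0 under feasibility
    intro hfeas
    have h0 : (fun _ : Fin J => (0:ℝ)) ∈ cube J := fun j => ⟨le_refl _, zero_le_one⟩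
    have h1 := hpoint _ h0
    have h2 : f (fun _ => (0:ℝ)) ≤ 0 := by
      refine Finset.sum_nonpos fun j _ => ?_
      have := hfeas.ir j _ h0
      simpa using this
    have h3 : (∑ i, ∑ j, lam i j * ((0:ℝ))^((i:ℕ)+1)) = 0 := by
      simp
    rw [h3] at h1
    linarith
  · -- moment identity
    rw [hlam0_def]
    ring


end
end
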